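/- arXiv:1908.01168 — 6 statements merged into one kernel-verified Lean document; each statement's English description precedes it below -/
import Mathlib

section
/- Let λ ∈ (0, 1/2) and φ_λ(x) = ∫₀^∞ y^{-2λ} exp(-(y-x)²/2) dy. Then φ_λ is twice continuously differentiable and satisfies the ODE φ_λ''(x) + x·φ_λ'(x) + 2λ·φ_λ(x) = 0 for all x ∈ ℝ. -/
set_option maxHeartbeats 1000000


open Real MeasureTheory Set Filter Topology

private lemma aux_poly_exp (t : ℝ) : (1 + t^2) * Real.exp (-t^2/4) ≤ 5 := by
  have he : 1 + t^2/4 ≤ Real.exp (t^2/4) := by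
    have := Real.add_one_le_exp (t^2/4); linarith
  have hp : (0:ℝ) < Real.exp (t^2/4) := Real.exp_pos _
  rw [show -t^2/4 = -(t^2/4) by ring, Real.exp_neg, mul_inv_le_iff₀' hp]
  nlinarith [sq_nonneg t]

private lemma exp_max_le (B x y : ℝ) (hx : x ≤ B) :
    Real.exp (-(y-x)^2/4) ≤ Real.exp (-(max (y-B) 0)^2/4) := by
  apply Real.exp_le_exp.mpr
  have h1 : max (y-B) 0 ≤ |y-x| :=
    max_le (le_trans (by linarith) (le_abs_self _)) (abs_nonneg _)
  have h0 : (0:ℝ) ≤ max (y-B) 0 := le_max_right _ _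
  have h2 : (max (y-B) 0)^2 ≤ (y-x)^2 := by
    have := sq_abs (y-x)
    nlinarith [abs_nonneg (y-x)]
  linarith

private lemma pointwise_bound (c B x y p C : ℝ) (hx : x ≤ B) (hy : 0 < y)
    (hC : 0 ≤ C) (hp : |p| ≤ C * (1 + (y-x)^2)) :
    |y ^ c * (p * Real.exp (-(y-x)^2/2))| ≤
      (5*C) * (y ^ c * Real.exp (-(max (y-B) 0)^2/4)) := by
  have hyc : 0 ≤ y ^ c := Real.rpow_nonneg hy.le c
  rw [abs_mul, abs_mul, abs_of_nonneg hyc, abs_of_nonneg (Real.exp_pos _).le]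
  have hsplit : Real.exp (-(y-x)^2/2) = Real.exp (-(y-x)^2/4) * Real.exp (-(y-x)^2/4) := by
    rw [← Real.exp_add]; ring_nf
  have key : |p| * Real.exp (-(y-x)^2/2) ≤ (5*C) * Real.exp (-(max (y-B) 0)^2/4) := by
    rw [hsplit]
    have h1 : |p| * (Real.exp (-(y-x)^2/4) * Real.exp (-(y-x)^2/4)) ≤
        (C * (1 + (y-x)^2)) * (Real.exp (-(y-x)^2/4) * Real.exp (-(y-x)^2/4)) :=
      mul_le_mul_of_nonneg_right hp (by positivity)
    have h2 : (C * (1 + (y-x)^2)) * (Real.exp (-(y-x)^2/4) * Real.exp (-(y-x)^2/4)) =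
        C * (((1 + (y-x)^2) * Real.exp (-(y-x)^2/4)) * Real.exp (-(y-x)^2/4)) := by ring
    have h3 : ((1 + (y-x)^2) * Real.exp (-(y-x)^2/4)) * Real.exp (-(y-x)^2/4) ≤
        5 * Real.exp (-(max (y-B) 0)^2/4) := by
      apply mul_le_mul (aux_poly_exp _) (exp_max_le B x y hx) (Real.exp_pos _).le (by norm_num)
    calc |p| * (Real.exp (-(y-x)^2/4) * Real.exp (-(y-x)^2/4))
        ≤ C * (((1 + (y-x)^2) * Real.exp (-(y-x)^2/4)) * Real.exp (-(y-x)^2/4)) := by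
          rw [← h2]; exact h1
      _ ≤ C * (5 * Real.exp (-(max (y-B) 0)^2/4)) := mul_le_mul_of_nonneg_left h3 hC
      _ = (5*C) * Real.exp (-(max (y-B) 0)^2/4) := by ring
  calc y ^ c * (|p| * Real.exp (-(y-x)^2/2))
      ≤ y ^ c * ((5*C) * Real.exp (-(max (y-B) 0)^2/4)) := mul_le_mul_of_nonneg_left key hyc
    _ = (5*C) * (y ^ c * Real.exp (-(max (y-B) 0)^2/4)) := by ring

private lemma bound_int (c B : ℝ) (hc1 : (-1:ℝ) < c) (hc2 : c ≤ 0) (hB : 0 < B) :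
    IntegrableOn (fun y => y ^ c * Real.exp (-(max (y - B) 0)^2/4)) (Ioi (0:ℝ)) := by
  have hsplit : Ioi (0:ℝ) = Ioc 0 B ∪ Ioi B := (Ioc_union_Ioi_eq_Ioi hB.le).symm
  rw [hsplit]
  have hcont : ContinuousOn (fun y : ℝ => y ^ c * Real.exp (-(max (y - B) 0)^2/4))
      (Ioi (0:ℝ)) := by
    apply ContinuousOn.mul
    · exact fun y hy => ((continuousAt_id).continuousWithinAt).rpow_const (Or.inl (ne_of_gt hy))
    · exact (Continuous.continuousOn (by fun_prop))
  apply IntegrableOn.union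
  · -- on Ioc 0 B, dominated by y ^ c
    have h1 : IntegrableOn (fun y : ℝ => y ^ c) (Ioc 0 B) := by
      have h := intervalIntegral.intervalIntegrable_rpow' (a := 0) (b := B) hc1
      rw [intervalIntegrable_iff_integrableOn_Ioc_of_le hB.le] at h
      exact h
    refine Integrable.mono' h1 ?_ ?_
    · exact (hcont.mono Ioc_subset_Ioi_self).aestronglyMeasurable measurableSet_Ioc
    · rw [ae_restrict_iff' measurableSet_Ioc]
      refine Eventually.of_forall fun y hy => ?_
      have hyc : 0 ≤ y ^ c := Real.rpow_nonneg hy.1.le c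
      have he : Real.exp (-(max (y - B) 0)^2/4) ≤ 1 := by
        rw [show (1:ℝ) = Real.exp 0 by simp]
        apply Real.exp_le_exp.mpr
        nlinarith [sq_nonneg (max (y - B) 0)]
      rw [Real.norm_eq_abs, abs_mul, abs_of_nonneg hyc,
        abs_of_nonneg (Real.exp_pos _).le]
      nlinarith
  · -- on Ioi B, dominated by B^c * exp(-(y-B)^2/4)
    have h2 : Integrable (fun y : ℝ => Real.exp (-(1/4:ℝ) * (y - B)^2)) := by
      have h := integrable_exp_neg_mul_sq (b := (1/4:ℝ)) (by norm_num)
      exact h.comp_sub_right B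
    have h3 : IntegrableOn (fun y : ℝ => B ^ c * Real.exp (-(1/4:ℝ) * (y - B)^2)) (Ioi B) :=
      (h2.const_mul (B ^ c)).integrableOn
    refine Integrable.mono' h3 ?_ ?_
    · exact (hcont.mono fun y hy => lt_trans hB hy).aestronglyMeasurable measurableSet_Ioi
    · rw [ae_restrict_iff' measurableSet_Ioi]
      refine Eventually.of_forall fun y hy => ?_
      have hy' : B < y := hy
      have hyc : 0 ≤ y ^ c := Real.rpow_nonneg (lt_trans hB hy').le c
      have hmax : max (y - B) 0 = y - B := max_eq_left (by linarith)
      have hBc : y ^ c ≤ B ^ c := Real.rpow_le_rpow_of_nonpos hB hy'.le hc2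
      rw [Real.norm_eq_abs, abs_mul, abs_of_nonneg hyc, abs_of_nonneg (Real.exp_pos _).le,
        hmax, show -(y-B)^2/4 = -(1/4:ℝ) * (y - B)^2 by ring]
      exact mul_le_mul_of_nonneg_right hBc (Real.exp_pos _).le

private lemma hasDerivAt_exp_part (y x : ℝ) :
    HasDerivAt (fun x : ℝ => Real.exp (-(y - x)^2/2)) ((y - x) * Real.exp (-(y - x)^2/2)) x := by
  have h1 : HasDerivAt (fun x : ℝ => y - x) (-1) x := (hasDerivAt_id x).const_sub y
  have h2 : HasDerivAt (fun x : ℝ => -(y - x)^2/2)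
      (-(2 * (y - x)^1 * (-1))/2) x := ((h1.pow 2).neg).div_const 2
  have h3 : HasDerivAt (fun x : ℝ => -(y - x)^2/2) (y - x) x := by
    convert h2 using 1; ring
  have := h3.exp
  convert this using 1; ring

theorem stmt_1 (l : ℝ) (hl : 0 < l) (hl2 : l < 1/2)
    (φ : ℝ → ℝ)
    (hφ : ∀ x : ℝ, φ x = ∫ y in Ioi (0:ℝ), y ^ (-(2*l)) * Real.exp (-(y - x)^2 / 2)) :
    ContDiff ℝ 2 φ ∧
    ∀ x : ℝ, deriv (deriv φ) x + x * deriv φ x + 2 * l * φ x = 0 := by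
  obtain rfl : φ = fun x => ∫ y in Ioi (0:ℝ), y ^ (-(2*l)) * Real.exp (-(y - x)^2 / 2) :=
    funext hφ
  clear hφ
  set c : ℝ := -(2*l) with hcdef
  have hc1 : (-1:ℝ) < c := by rw [hcdef]; linarith
  have hc2 : c ≤ 0 := by rw [hcdef]; linarith
  -- measurability helper
  have measAux : ∀ g : ℝ → ℝ, Continuous g →
      AEStronglyMeasurable (fun y : ℝ => y ^ c * g y) (volume.restrict (Ioi 0)) := by
    intro g hg
    apply ContinuousOn.aestronglyMeasurable _ measurableSet_Ioi
    apply ContinuousOn.mul _ hg.continuousOn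
    exact fun y hy => ((continuousAt_id).continuousWithinAt).rpow_const (Or.inl (ne_of_gt hy))
  -- integrability helper
  have hInt : ∀ (x : ℝ) (p : ℝ → ℝ) (C : ℝ), 0 ≤ C → Continuous p →
      (∀ y : ℝ, 0 < y → |p y| ≤ C * (1 + (y - x)^2)) →
      IntegrableOn (fun y => y ^ c * (p y * Real.exp (-(y - x)^2/2))) (Ioi (0:ℝ)) := by
    intro x p C hC hp hple
    have hB : (0:ℝ) < |x| + 1 := by positivity
    refine Integrable.mono' ((bound_int c (|x|+1) hc1 hc2 hB).const_mul (5*C)) ?_ ?_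
    · exact measAux _ (by fun_prop)
    · rw [ae_restrict_iff' measurableSet_Ioi]
      refine Eventually.of_forall fun y hy => ?_
      rw [Real.norm_eq_abs]
      exact pointwise_bound c (|x|+1) x y (p y) C
        (by linarith [le_abs_self x]) hy hC (hple y hy)
  -- the three integrands and their integrals
  set φ1 : ℝ → ℝ := fun x => ∫ y in Ioi (0:ℝ),
    y ^ c * ((y - x) * Real.exp (-(y - x)^2/2)) with hφ1
  set φ2 : ℝ → ℝ := fun x => ∫ y in Ioi (0:ℝ),
    y ^ c * (((y - x)^2 - 1) * Real.exp (-(y - x)^2/2)) with hφ2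
  -- abs bounds for the polynomial factors
  have habs1 : ∀ x y : ℝ, |(1:ℝ)| ≤ 1 * (1 + (y - x)^2) := by
    intro x y; rw [abs_one]; nlinarith [sq_nonneg (y-x)]
  have habs2 : ∀ x y : ℝ, |y - x| ≤ 1 * (1 + (y - x)^2) := by
    intro x y
    rw [one_mul]
    rcases abs_cases (y - x) with ⟨h, _⟩ | ⟨h, _⟩ <;> nlinarith [sq_nonneg (y - x - 1),
      sq_nonneg (y - x + 1)]
  have habs3 : ∀ x y : ℝ, |(y - x)^2 - 1| ≤ 1 * (1 + (y - x)^2) := by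
    intro x y
    rw [one_mul]
    rcases abs_cases ((y - x)^2 - 1) with ⟨h, _⟩ | ⟨h, _⟩ <;> nlinarith [sq_nonneg (y - x)]
  -- integrability of the three integrands at each x
  have hI0 : ∀ x : ℝ, IntegrableOn (fun y => y ^ c * Real.exp (-(y - x)^2/2)) (Ioi (0:ℝ)) := by
    intro x
    have := hInt x (fun _ => 1) 1 one_pos.le continuous_const (fun y _ => habs1 x y)
    simpa using this
  have hI1 : ∀ x : ℝ, IntegrableOn (fun y => y ^ c * ((y - x) * Real.exp (-(y - x)^2/2)))
      (Ioi (0:ℝ)) :=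
    fun x => hInt x (fun y => y - x) 1 one_pos.le (by fun_prop) (fun y _ => habs2 x y)
  have hI2 : ∀ x : ℝ, IntegrableOn
      (fun y => y ^ c * (((y - x)^2 - 1) * Real.exp (-(y - x)^2/2))) (Ioi (0:ℝ)) :=
    fun x => hInt x (fun y => (y - x)^2 - 1) 1 one_pos.le (by fun_prop)
      (fun y _ => habs3 x y)
  -- first derivative
  have hD1 : ∀ x₀ : ℝ, HasDerivAt
      (fun x => ∫ y in Ioi (0:ℝ), y ^ c * Real.exp (-(y - x)^2 / 2)) (φ1 x₀) x₀ := by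
    intro x₀
    set B : ℝ := |x₀| + 1 with hBdef
    have hB : (0:ℝ) < B := by positivity
    have hball : ∀ x ∈ Metric.ball x₀ 1, x ≤ B := by
      intro x hx
      rw [Metric.mem_ball, Real.dist_eq] at hx
      have h1 := abs_lt.1 hx
      have h2 := le_abs_self x₀
      rw [hBdef]; linarith [h1.2]
    refine (hasDerivAt_integral_of_dominated_loc_of_deriv_le
      (F := fun x (y : ℝ) => y ^ c * Real.exp (-(y - x)^2 / 2))
      (F' := fun x (y : ℝ) => y ^ c * ((y - x) * Real.exp (-(y - x)^2/2)))
      (bound := fun y : ℝ => (5*1) * (y ^ c * Real.exp (-(max (y - B) 0)^2/4)))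
      (Metric.ball_mem_nhds x₀ one_pos)
      (Eventually.of_forall fun x => measAux _ (by fun_prop))
      ?_ (measAux _ (by fun_prop)) ?_
      ((bound_int c B hc1 hc2 hB).const_mul (5*1)) ?_).2
    · -- integrable at x₀
      exact hI0 x₀
    · -- bound
      rw [ae_restrict_iff' measurableSet_Ioi]
      refine Eventually.of_forall fun y hy => fun x hx => ?_
      rw [Real.norm_eq_abs]
      exact pointwise_bound c B x y (y - x) 1 (hball x hx) hy one_pos.le (habs2 x y)
    · -- differentiability
      refine Eventually.of_forall fun y => fun x _ => ?_
      exact (hasDerivAt_exp_part y x).const_mul (y ^ c)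
  -- second derivative
  have hDexp2 : ∀ y x : ℝ, HasDerivAt (fun x : ℝ => y ^ c * ((y - x) * Real.exp (-(y - x)^2/2)))
      (y ^ c * (((y - x)^2 - 1) * Real.exp (-(y - x)^2/2))) x := by
    intro y x
    have h1 : HasDerivAt (fun x : ℝ => y - x) (-1) x := (hasDerivAt_id x).const_sub y
    have h2 := h1.mul (hasDerivAt_exp_part y x)
    have h3 := h2.const_mul (y ^ c)
    refine h3.congr_deriv ?_; ring
  have hD2 : ∀ x₀ : ℝ, HasDerivAt φ1 (φ2 x₀) x₀ := by
    intro x₀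
    set B : ℝ := |x₀| + 1 with hBdef
    have hB : (0:ℝ) < B := by positivity
    have hball : ∀ x ∈ Metric.ball x₀ 1, x ≤ B := by
      intro x hx
      rw [Metric.mem_ball, Real.dist_eq] at hx
      have h1 := abs_lt.1 hx
      have h2 := le_abs_self x₀
      rw [hBdef]; linarith [h1.2]
    refine (hasDerivAt_integral_of_dominated_loc_of_deriv_le
      (F := fun x (y : ℝ) => y ^ c * ((y - x) * Real.exp (-(y - x)^2/2)))
      (F' := fun x (y : ℝ) => y ^ c * (((y - x)^2 - 1) * Real.exp (-(y - x)^2/2)))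
      (bound := fun y : ℝ => (5*1) * (y ^ c * Real.exp (-(max (y - B) 0)^2/4)))
      (Metric.ball_mem_nhds x₀ one_pos)
      (Eventually.of_forall fun x => measAux _ (by fun_prop))
      (hI1 x₀) (measAux _ (by fun_prop)) ?_
      ((bound_int c B hc1 hc2 hB).const_mul (5*1)) ?_).2
    · rw [ae_restrict_iff' measurableSet_Ioi]
      refine Eventually.of_forall fun y hy => fun x hx => ?_
      rw [Real.norm_eq_abs]
      exact pointwise_bound c B x y ((y - x)^2 - 1) 1 (hball x hx) hy one_pos.le (habs3 x y)
    · exact Eventually.of_forall fun y => fun x _ => hDexp2 y x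
  have hderiv1 : deriv (fun x => ∫ y in Ioi (0:ℝ), y ^ c * Real.exp (-(y - x)^2 / 2)) = φ1 :=
    funext fun x => (hD1 x).deriv
  have hderiv2 : deriv φ1 = φ2 := funext fun x => (hD2 x).deriv
  -- continuity of φ2
  have hcont2 : Continuous φ2 := by
    rw [continuous_iff_continuousAt]
    intro x₀
    set B : ℝ := |x₀| + 1 with hBdef
    have hB : (0:ℝ) < B := by positivity
    have hball : ∀ x ∈ Metric.ball x₀ 1, x ≤ B := by
      intro x hx
      rw [Metric.mem_ball, Real.dist_eq] at hx
      have h1 := abs_lt.1 hx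
      have h2 := le_abs_self x₀
      rw [hBdef]; linarith [h1.2]
    refine continuousAt_of_dominated
      (F := fun x (y : ℝ) => y ^ c * (((y - x)^2 - 1) * Real.exp (-(y - x)^2/2)))
      (bound := fun y : ℝ => (5*1) * (y ^ c * Real.exp (-(max (y - B) 0)^2/4)))
      (Eventually.of_forall fun x => measAux _ (by fun_prop)) ?_
      ((bound_int c B hc1 hc2 hB).const_mul (5*1)) ?_
    · refine eventually_of_mem (Metric.ball_mem_nhds x₀ one_pos) fun x hx => ?_
      rw [ae_restrict_iff' measurableSet_Ioi]
      refine Eventually.of_forall fun y hy => ?_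
      rw [Real.norm_eq_abs]
      exact pointwise_bound c B x y ((y - x)^2 - 1) 1 (hball x hx) hy one_pos.le (habs3 x y)
    · refine Eventually.of_forall fun y => ?_
      exact Continuous.continuousAt (by fun_prop)
  have hd1 : Differentiable ℝ (fun x => ∫ y in Ioi (0:ℝ), y ^ c * Real.exp (-(y - x)^2 / 2)) :=
    fun x => (hD1 x).differentiableAt
  have hd2 : Differentiable ℝ
      (deriv (fun x => ∫ y in Ioi (0:ℝ), y ^ c * Real.exp (-(y - x)^2 / 2))) := by
    rw [hderiv1]; exact fun x => (hD2 x).differentiableAt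
  constructor
  · -- smoothness
    rw [show ((2:WithTop ℕ∞)) = 1 + 1 from rfl, contDiff_succ_iff_deriv]
    refine ⟨hd1, by simp, ?_⟩
    rw [contDiff_one_iff_deriv]
    refine ⟨hd2, ?_⟩
    rw [hderiv1, hderiv2]
    exact hcont2
  · -- the ODE
    intro x
    rw [hderiv1, hderiv2]
    -- FTC on g y = y ^ (1 + c) * exp(-(y-x)^2/2)
    set g : ℝ → ℝ := fun y => y ^ (1 + c) * Real.exp (-(y - x)^2/2) with hgdef
    set g' : ℝ → ℝ := fun y => (1 + c) * (y ^ c * Real.exp (-(y - x)^2/2)) -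
      y ^ (1 + c) * ((y - x) * Real.exp (-(y - x)^2/2)) with hg'def
    have h1c : (0:ℝ) < 1 + c := by rw [hcdef]; linarith
    have hgderiv : ∀ y ∈ Ioi (0:ℝ), HasDerivAt g (g' y) y := by
      intro y hy
      have hy' : (0:ℝ) < y := hy
      have hrp : HasDerivAt (fun y : ℝ => y ^ (1 + c)) ((1 + c) * y ^ (1 + c - 1)) y :=
        Real.hasDerivAt_rpow_const (Or.inl hy'.ne')
      have hex : HasDerivAt (fun y : ℝ => Real.exp (-(y - x)^2/2))
          (-((y - x) * Real.exp (-(y - x)^2/2))) y := by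
        have h1 : HasDerivAt (fun y : ℝ => y - x) 1 y := (hasDerivAt_id y).sub_const x
        have h2 : HasDerivAt (fun y : ℝ => -(y - x)^2/2)
            (-(2 * (y - x)^1 * 1)/2) y := ((h1.pow 2).neg).div_const 2
        have h3 : HasDerivAt (fun y : ℝ => -(y - x)^2/2) (-(y - x)) y := by
          convert h2 using 1; ring
        have := h3.exp
        convert this using 1; ring
      have := hrp.mul hex
      rw [show (1 + c - 1 : ℝ) = c by ring] at this
      refine this.congr_deriv ?_
      rw [hg'def]; ring
    have hgcont : ContinuousWithinAt g (Ici (0:ℝ)) 0 := by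
      apply ContinuousWithinAt.mul
      · exact (continuousWithinAt_id).rpow_const (Or.inr h1c.le)
      · exact (Continuous.continuousWithinAt (by fun_prop))
    have hg'int : IntegrableOn g' (Ioi (0:ℝ)) := by
      have hpartA : IntegrableOn (fun y => (1 + c) * (y ^ c * Real.exp (-(y - x)^2/2)))
          (Ioi (0:ℝ)) := (hI0 x).const_mul _
      have hpartB : IntegrableOn (fun y => y ^ (1 + c) * ((y - x) * Real.exp (-(y - x)^2/2)))
          (Ioi (0:ℝ)) := by
        have heq : EqOn (fun y : ℝ => y ^ c * ((y * (y - x)) * Real.exp (-(y - x)^2/2)))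
            (fun y : ℝ => y ^ (1 + c) * ((y - x) * Real.exp (-(y - x)^2/2))) (Ioi (0:ℝ)) := by
          intro y hy
          have hy' : (0:ℝ) < y := hy
          simp only
          rw [Real.rpow_add hy', Real.rpow_one]
          ring
        refine IntegrableOn.congr_fun ?_ heq measurableSet_Ioi
        apply hInt x (fun y => y * (y - x)) (1 + |x|) (by positivity) (by fun_prop)
        intro y hy
        have h1 : |y * (y - x)| = |y| * |y - x| := abs_mul _ _
        have h2 : |y| ≤ |y - x| + |x| := by
          calc |y| = |(y - x) + x| := by ring_nf
            _ ≤ |y - x| + |x| := abs_add_le _ _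
        nlinarith [abs_nonneg (y - x), abs_nonneg x, sq_abs (y - x),
          sq_nonneg (|y - x| - 1), abs_nonneg (y * (y - x))]
      exact hpartA.sub hpartB
    have hgtend : Tendsto g atTop (𝓝 0) := by
      have hupper : ∀ᶠ y in atTop, g y ≤ Real.exp x * (y * Real.exp (-y)) := by
        filter_upwards [eventually_ge_atTop (max 1 (x + 2))] with y hy
        have hy1 : (1:ℝ) ≤ y := le_trans (le_max_left _ _) hy
        have hy2 : x + 2 ≤ y := le_trans (le_max_right _ _) hy
        have hr : y ^ (1 + c) ≤ y := by
          calc y ^ (1 + c) ≤ y ^ (1:ℝ) :=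
            Real.rpow_le_rpow_of_exponent_le hy1 (by rw [hcdef]; linarith)
          _ = y := Real.rpow_one y
        have hexp : Real.exp (-(y - x)^2/2) ≤ Real.exp x * Real.exp (-y) := by
          rw [← Real.exp_add]
          apply Real.exp_le_exp.mpr
          nlinarith [sq_nonneg (y - x - 2)]
        calc g y ≤ y * Real.exp (-(y - x)^2/2) :=
              mul_le_mul_of_nonneg_right hr (Real.exp_pos _).le
          _ ≤ y * (Real.exp x * Real.exp (-y)) := by
              apply mul_le_mul_of_nonneg_left hexp (by linarith)
          _ = Real.exp x * (y * Real.exp (-y)) := by ring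
      have hlower : ∀ᶠ y in atTop, 0 ≤ g y := by
        filter_upwards [eventually_ge_atTop (0:ℝ)] with y hy
        exact mul_nonneg (Real.rpow_nonneg hy _) (Real.exp_pos _).le
      have hlim : Tendsto (fun y : ℝ => Real.exp x * (y * Real.exp (-y))) atTop (𝓝 0) := by
        have h := tendsto_pow_mul_exp_neg_atTop_nhds_zero 1
        have h' := h.const_mul (Real.exp x)
        simpa using h'
      exact squeeze_zero' hlower hupper hlim
    have hFTC : ∫ y in Ioi (0:ℝ), g' y = 0 - g 0 :=
      integral_Ioi_of_hasDerivAt_of_tendsto hgcont hgderiv hg'int hgtend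
    have hg0 : g 0 = 0 := by
      rw [hgdef]
      simp only
      rw [Real.zero_rpow h1c.ne', zero_mul]
    rw [hg0, sub_zero] at hFTC
    -- combined integrand equals -g' on Ioi 0
    have hcomb : EqOn (fun y : ℝ => -(g' y))
        (fun y : ℝ => y ^ c * (((y - x)^2 - 1) * Real.exp (-(y - x)^2/2)) +
          x * (y ^ c * ((y - x) * Real.exp (-(y - x)^2/2))) +
          2 * l * (y ^ c * Real.exp (-(y - x)^2/2))) (Ioi (0:ℝ)) := by
      intro y hy
      have hy' : (0:ℝ) < y := hy
      simp only [hg'def]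
      rw [Real.rpow_add hy', Real.rpow_one, hcdef]
      ring
    have hval : ∫ y in Ioi (0:ℝ), -(g' y) = 0 := by
      rw [integral_neg, hFTC, neg_zero]
    have hsplit : ∫ y in Ioi (0:ℝ), -(g' y) =
        φ2 x + x * φ1 x + 2 * l * (∫ y in Ioi (0:ℝ), y ^ c * Real.exp (-(y - x)^2 / 2)) := by
      have hAdd1 : Integrable (fun y : ℝ =>
          y ^ c * (((y - x)^2 - 1) * Real.exp (-(y - x)^2/2)) +
          x * (y ^ c * ((y - x) * Real.exp (-(y - x)^2/2)))) (volume.restrict (Ioi 0)) :=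
        (hI2 x).add ((hI1 x).const_mul x)
      rw [setIntegral_congr_fun measurableSet_Ioi hcomb]
      rw [integral_add hAdd1 ((hI0 x).const_mul (2*l)),
        integral_add (hI2 x) ((hI1 x).const_mul x), integral_const_mul, integral_const_mul]
    have hφx : (fun x => ∫ y in Ioi (0:ℝ), y ^ (-(2*l)) * Real.exp (-(y - x)^2 / 2)) x =
        ∫ y in Ioi (0:ℝ), y ^ c * Real.exp (-(y - x)^2 / 2) := rfl
    rw [hφx]
    linarith [hsplit.symm.trans hval]
end

section
/- Let λ ∈ (0, 1/2) and φ_λ(x) = ∫₀^∞ y^{-2λ} exp(-(y-x)²/2) dy. Then φ_λ''(−1) = ∫₀^∞ y^{-2λ}·((y+1)² − 1)·exp(−(y+1)²/2) dy > 0. -/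
open Real MeasureTheory Set

noncomputable def f1 (l x y : ℝ) : ℝ := y ^ (-(2*l)) * ((y - x) * Real.exp (-(y - x)^2 / 2))
noncomputable def f2 (l x y : ℝ) : ℝ := y ^ (-(2*l)) * (((y - x)^2 - 1) * Real.exp (-(y - x)^2 / 2))

lemma hd0 (l x y : ℝ) :
    HasDerivAt (fun x => y ^ (-(2*l)) * Real.exp (-(y - x)^2 / 2)) (f1 l x y) x := by
  have h1 : HasDerivAt (fun x : ℝ => y - x) (-1) x := (hasDerivAt_id x).const_sub y
  have h2 := ((h1.pow 2).neg.div_const 2).exp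
  have h3 := h2.const_mul (y ^ (-(2*l)))
  refine h3.congr_deriv ?_
  unfold f1
  simp only [Pi.neg_apply, Pi.pow_apply]
  push_cast
  ring

lemma hd1 (l x y : ℝ) : HasDerivAt (fun x => f1 l x y) (f2 l x y) x := by
  have h1 : HasDerivAt (fun x : ℝ => y - x) (-1) x := (hasDerivAt_id x).const_sub y
  have h2 := ((h1.pow 2).neg.div_const 2).exp
  have h3 := (h1.mul h2).const_mul (y ^ (-(2*l)))
  refine h3.congr_deriv ?_
  unfold f2
  simp only [Pi.neg_apply, Pi.pow_apply]
  push_cast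
  ring

lemma aux_int (l b C : ℝ) (hl : 0 < l) (hl2 : l < 1/2) (hb : 0 < b) :
    IntegrableOn (fun y : ℝ => C * (y ^ (-(2*l)) * Real.exp (-b * y^2))) (Ioi 0) :=
  (integrableOn_rpow_mul_exp_neg_mul_sq hb (by linarith : (-1:ℝ) < -(2*l))).const_mul C

lemma meas_aux (l : ℝ) (g : ℝ → ℝ) (hg : Continuous g) :
    AEStronglyMeasurable (fun y : ℝ => y ^ (-(2*l)) * g y) (volume.restrict (Ioi 0)) :=
  ((measurable_id.pow_const (-(2*l))).mul hg.measurable).aestronglyMeasurable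

lemma bexp (y : ℝ) : 1 + y^2/4 ≤ Real.exp (y^2/4) := by
  have := Real.add_one_le_exp (y^2/4); linarith

lemma bound1 (y x c : ℝ) (hy : 0 < y) (hc : 0 < c) (hx1 : x < 0) (hx2 : -x ≤ c) :
    (y - x) * Real.exp (-(y - x)^2 / 2) ≤ (2 + c) * Real.exp (-(1/4) * y^2) := by
  have h1 : Real.exp (-(y - x)^2 / 2) ≤ Real.exp (-y^2 / 2) := by
    apply Real.exp_le_exp.2; nlinarith
  have he := bexp y
  have h2 : y - x ≤ (2 + c) * Real.exp (y^2/4) := by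
    nlinarith [mul_le_mul_of_nonneg_left he (by linarith : (0:ℝ) ≤ 2 + c), sq_nonneg (y - 1)]
  have h3 : (y - x) * Real.exp (-(y - x)^2 / 2) ≤ ((2 + c) * Real.exp (y^2/4)) * Real.exp (-y^2/2) := by
    have hp : (0:ℝ) < Real.exp (-(y-x)^2/2) := Real.exp_pos _
    have := mul_le_mul h2 h1 (le_of_lt hp) (by positivity)
    nlinarith [mul_le_mul_of_nonneg_left h1 (by linarith : (0:ℝ) ≤ y - x),
      mul_le_mul_of_nonneg_right h2 (Real.exp_pos (-y^2/2)).le]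
  calc (y - x) * Real.exp (-(y - x)^2 / 2) ≤ (2 + c) * Real.exp (y^2/4) * Real.exp (-y^2/2) := h3
    _ = (2 + c) * Real.exp (-(1/4) * y^2) := by rw [mul_assoc, ← Real.exp_add]; ring_nf

lemma bound2 (y x c : ℝ) (hy : 0 < y) (hc : 0 < c) (hx1 : x < 0) (hx2 : -x ≤ c) :
    |(y - x)^2 - 1| * Real.exp (-(y - x)^2 / 2) ≤ (9 + 2*c^2) * Real.exp (-(1/4) * y^2) := by
  have h1 : Real.exp (-(y - x)^2 / 2) ≤ Real.exp (-y^2 / 2) := by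
    apply Real.exp_le_exp.2; nlinarith
  have he := bexp y
  have habs : |(y - x)^2 - 1| ≤ (y - x)^2 + 1 := by
    rw [abs_le]; constructor <;> nlinarith
  have h2 : (y - x)^2 + 1 ≤ (9 + 2*c^2) * Real.exp (y^2/4) := by
    nlinarith [mul_le_mul_of_nonneg_left he (by positivity : (0:ℝ) ≤ 9 + 2*c^2), sq_nonneg (y - c),
      sq_nonneg y, sq_nonneg c, mul_nonneg (sq_nonneg c) (sq_nonneg y)]
  have hb : |(y - x)^2 - 1| ≤ (9 + 2*c^2) * Real.exp (y^2/4) := habs.trans h2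
  have h3 : |(y - x)^2 - 1| * Real.exp (-(y - x)^2 / 2) ≤ ((9 + 2*c^2) * Real.exp (y^2/4)) * Real.exp (-y^2/2) := by
    nlinarith [mul_le_mul_of_nonneg_left h1 (abs_nonneg ((y-x)^2-1)),
      mul_le_mul_of_nonneg_right hb (Real.exp_pos (-y^2/2)).le]
  calc |(y - x)^2 - 1| * Real.exp (-(y - x)^2 / 2) ≤ (9 + 2*c^2) * Real.exp (y^2/4) * Real.exp (-y^2/2) := h3
    _ = (9 + 2*c^2) * Real.exp (-(1/4) * y^2) := by rw [mul_assoc, ← Real.exp_add]; ring_nf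

lemma key1 (l : ℝ) (hl : 0 < l) (hl2 : l < 1/2) (x₀ : ℝ) (hx₀ : x₀ < 0) :
    Integrable (f1 l x₀) (volume.restrict (Ioi 0)) ∧
    HasDerivAt (fun x => ∫ y in Ioi (0:ℝ), y ^ (-(2*l)) * Real.exp (-(y - x)^2 / 2))
      (∫ y in Ioi (0:ℝ), f1 l x₀ y) x₀ := by
  have hc : (0:ℝ) < 3*(-x₀)/2 := by linarith
  apply hasDerivAt_integral_of_dominated_loc_of_deriv_le (s := Metric.ball x₀ (-x₀/2))
    (bound := fun y => (2 + 3*(-x₀)/2) * (y ^ (-(2*l)) * Real.exp (-(1/4) * y^2)))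
  · exact Metric.ball_mem_nhds _ (by linarith)
  · filter_upwards with x
    exact meas_aux l _ (by continuity)
  · -- integrability of F x₀
    apply Integrable.mono' (aux_int l (1/2) 1 hl hl2 (by norm_num))
      (meas_aux l _ (by continuity))
    filter_upwards [self_mem_ae_restrict (measurableSet_Ioi : MeasurableSet (Ioi (0:ℝ)))] with y hy
    have hy' : (0:ℝ) < y := hy
    have hrp : (0:ℝ) < y ^ (-(2*l)) := Real.rpow_pos_of_pos hy' _
    have h1 : Real.exp (-(y - x₀)^2 / 2) ≤ Real.exp (-(1/2) * y^2) := by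
      apply Real.exp_le_exp.2; nlinarith
    rw [Real.norm_eq_abs, abs_of_nonneg (by positivity)]
    calc y ^ (-(2*l)) * Real.exp (-(y - x₀)^2 / 2)
        ≤ y ^ (-(2*l)) * Real.exp (-(1/2) * y^2) := by
          exact mul_le_mul_of_nonneg_left h1 hrp.le
      _ = 1 * (y ^ (-(2*l)) * Real.exp (-(1/2) * y^2)) := by ring
  · exact meas_aux l _ (by continuity)
  · -- bound
    filter_upwards [self_mem_ae_restrict (measurableSet_Ioi : MeasurableSet (Ioi (0:ℝ)))] with y hy x hx
    have hy' : (0:ℝ) < y := hy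
    have hrp : (0:ℝ) < y ^ (-(2*l)) := Real.rpow_pos_of_pos hy' _
    rw [Metric.mem_ball, Real.dist_eq, abs_lt] at hx
    have hx1 : x < 0 := by linarith
    have hx2 : -x ≤ 3*(-x₀)/2 := by linarith
    have hb := bound1 y x (3*(-x₀)/2) hy' hc hx1 hx2
    have hyx : (0:ℝ) < y - x := by linarith
    rw [Real.norm_eq_abs, f1, abs_of_nonneg (by positivity)]
    calc y ^ (-(2*l)) * ((y - x) * Real.exp (-(y - x)^2 / 2))
        ≤ y ^ (-(2*l)) * ((2 + 3*(-x₀)/2) * Real.exp (-(1/4) * y^2)) :=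
          mul_le_mul_of_nonneg_left hb hrp.le
      _ = (2 + 3*(-x₀)/2) * (y ^ (-(2*l)) * Real.exp (-(1/4) * y^2)) := by ring
  · exact aux_int l (1/4) _ hl hl2 (by norm_num)
  · filter_upwards with y x _
    exact hd0 l x y

lemma key2 (l : ℝ) (hl : 0 < l) (hl2 : l < 1/2) :
    Integrable (f2 l (-1)) (volume.restrict (Ioi 0)) ∧
    HasDerivAt (fun x => ∫ y in Ioi (0:ℝ), f1 l x y)
      (∫ y in Ioi (0:ℝ), f2 l (-1) y) (-1) := by
  apply hasDerivAt_integral_of_dominated_loc_of_deriv_le (s := Metric.ball (-1) (1/2))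
    (bound := fun y => (9 + 2*(3/2:ℝ)^2) * (y ^ (-(2*l)) * Real.exp (-(1/4) * y^2)))
  · exact Metric.ball_mem_nhds _ (by norm_num)
  · filter_upwards with x
    exact meas_aux l _ (by continuity)
  · exact (key1 l hl hl2 (-1) (by norm_num)).1
  · exact meas_aux l _ (by continuity)
  · filter_upwards [self_mem_ae_restrict (measurableSet_Ioi : MeasurableSet (Ioi (0:ℝ)))] with y hy x hx
    have hy' : (0:ℝ) < y := hy
    have hrp : (0:ℝ) < y ^ (-(2*l)) := Real.rpow_pos_of_pos hy' _
    rw [Metric.mem_ball, Real.dist_eq, abs_lt] at hx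
    have hx1 : x < 0 := by linarith
    have hx2 : -x ≤ 3/2 := by linarith
    have hb := bound2 y x (3/2) hy' (by norm_num) hx1 hx2
    rw [Real.norm_eq_abs, f2, abs_mul, abs_mul,
      abs_of_nonneg hrp.le, abs_of_nonneg (Real.exp_pos _).le]
    calc y ^ (-(2*l)) * (|(y - x)^2 - 1| * Real.exp (-(y - x)^2 / 2))
        ≤ y ^ (-(2*l)) * ((9 + 2*(3/2:ℝ)^2) * Real.exp (-(1/4) * y^2)) :=
          mul_le_mul_of_nonneg_left hb hrp.le
      _ = (9 + 2*(3/2:ℝ)^2) * (y ^ (-(2*l)) * Real.exp (-(1/4) * y^2)) := by ring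
  · exact aux_int l (1/4) _ hl hl2 (by norm_num)
  · filter_upwards with y x _
    exact hd1 l x y

theorem stmt_4 (l : ℝ) (hl : 0 < l) (hl2 : l < 1/2)
    (φ : ℝ → ℝ)
    (hφ : ∀ x : ℝ, φ x = ∫ y in Ioi (0:ℝ), y ^ (-(2*l)) * Real.exp (-(y - x)^2 / 2)) :
    deriv (deriv φ) (-1) =
      ∫ y in Ioi (0:ℝ), y ^ (-(2*l)) * ((y + 1)^2 - 1) * Real.exp (-(y + 1)^2 / 2) ∧
    0 < deriv (deriv φ) (-1) := by
  have hφ' : φ = fun x => ∫ y in Ioi (0:ℝ), y ^ (-(2*l)) * Real.exp (-(y - x)^2 / 2) :=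
    funext hφ
  have hderiv : deriv φ =ᶠ[nhds (-1)] fun x => ∫ y in Ioi (0:ℝ), f1 l x y := by
    filter_upwards [Iio_mem_nhds (show (-1:ℝ) < 0 by norm_num)] with x hx
    rw [hφ']
    exact (key1 l hl hl2 x hx).2.deriv
  have hfun : (fun y => f2 l (-1) y) =
      fun y => y ^ (-(2*l)) * ((y + 1)^2 - 1) * Real.exp (-(y + 1)^2 / 2) := by
    funext y
    rw [f2, show y - (-1) = y + 1 by ring, mul_assoc]
  have h2 : deriv (deriv φ) (-1) = ∫ y in Ioi (0:ℝ), f2 l (-1) y := by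
    rw [hderiv.deriv_eq]
    exact (key2 l hl hl2).2.deriv
  have heq : deriv (deriv φ) (-1) =
      ∫ y in Ioi (0:ℝ), y ^ (-(2*l)) * ((y + 1)^2 - 1) * Real.exp (-(y + 1)^2 / 2) := by
    rw [h2]; rw [show (fun y => f2 l (-1) y) = _ from hfun]
  refine ⟨heq, ?_⟩
  rw [heq]
  have hint : IntegrableOn (fun y => y ^ (-(2*l)) * ((y + 1)^2 - 1) * Real.exp (-(y + 1)^2 / 2))
      (Ioi (0:ℝ)) := by
    have := (key2 l hl hl2).1
    rwa [show (f2 l (-1)) = _ from hfun] at this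
  have hpos : ∀ y ∈ Ioi (0:ℝ),
      0 < y ^ (-(2*l)) * ((y + 1)^2 - 1) * Real.exp (-(y + 1)^2 / 2) := by
    intro y hy
    have hy' : (0:ℝ) < y := hy
    have h1 : (0:ℝ) < y ^ (-(2*l)) := Real.rpow_pos_of_pos hy' _
    have h2 : (0:ℝ) < (y + 1)^2 - 1 := by nlinarith
    positivity
  refine (setIntegral_pos_iff_support_of_nonneg_ae ?_ hint).2 ?_
  · filter_upwards [self_mem_ae_restrict (measurableSet_Ioi : MeasurableSet (Ioi (0:ℝ)))] with y hy
    exact (hpos y hy).le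
  · have hs : Ioi (0:ℝ) ⊆
        Function.support (fun y => y ^ (-(2*l)) * ((y + 1)^2 - 1) * Real.exp (-(y + 1)^2 / 2)) ∩
          Ioi 0 := fun y hy => ⟨(hpos y hy).ne', hy⟩
    calc (0:ENNReal) < volume (Ioi (0:ℝ)) := by rw [Real.volume_Ioi]; simp
      _ ≤ _ := measure_mono hs
end

section
/- Define g(λ) = ∫₁^∞ ((t+1)^{-2λ} + (t−1)^{-2λ})(t²−1)exp(−t²/2) dt for λ ∈ (0, 1/2). Then g is strictly convex on (0, 1/2), and lim_{λ→0⁺} g(λ) = lim_{λ→1/2⁻} g(λ) = 2·exp(−1/2); consequently g(λ) < 2·exp(−1/2) for all λ ∈ (0, 1/2). -/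
open Real MeasureTheory Set Filter



noncomputable def phi (l t : ℝ) : ℝ :=
  ((t+1) ^ (-(2*l)) + (t-1) ^ (-(2*l))) * (t^2 - 1) * Real.exp (-t^2/2)

noncomputable def Dbd (t : ℝ) : ℝ := 4 * t^2 * Real.exp (-t^2/2)

lemma phi_nonneg {l t : ℝ} (ht : t ∈ Ioi (1:ℝ)) : 0 ≤ phi l t := by
  have ht1 : (1:ℝ) < t := ht
  have h1 : (0:ℝ) ≤ (t+1) ^ (-(2*l)) := Real.rpow_nonneg (by linarith) _
  have h2 : (0:ℝ) ≤ (t-1) ^ (-(2*l)) := Real.rpow_nonneg (by linarith) _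
  have h3 : (0:ℝ) ≤ t^2 - 1 := by nlinarith
  have := (Real.exp_pos (-t^2/2)).le
  unfold phi; positivity

lemma phi_le {l t : ℝ} (hl : l ∈ Icc (0:ℝ) (1/2)) (ht : t ∈ Ioi (1:ℝ)) :
    phi l t ≤ Dbd t := by
  have ht1 : (1:ℝ) < t := ht
  have hexp : -(2*l) ≤ 0 := by have := hl.1; linarith
  have h1 : (t+1) ^ (-(2*l)) ≤ 1 :=
    Real.rpow_le_one_of_one_le_of_nonpos (by linarith) hexp
  have h3 : (0:ℝ) < t^2 - 1 := by nlinarith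
  have hb : (t-1) ^ (-(2*l)) * (t^2 - 1) ≤ (t+1) + (t^2-1) := by
    rcases le_or_gt 1 (t-1) with h | h
    · have : (t-1) ^ (-(2*l)) ≤ 1 := Real.rpow_le_one_of_one_le_of_nonpos h hexp
      nlinarith [Real.rpow_nonneg (show (0:ℝ) ≤ t-1 by linarith) (-(2*l))]
    · have hpos : (0:ℝ) < t - 1 := by linarith
      have : (t-1) ^ (-(2*l)) ≤ (t-1) ^ (-1:ℝ) := by
        apply Real.rpow_le_rpow_of_exponent_ge hpos h.le
        have := hl.2; linarith
      have h2 : (t-1) ^ (-1:ℝ) = (t-1)⁻¹ := Real.rpow_neg_one _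
      calc (t-1) ^ (-(2*l)) * (t^2-1) ≤ (t-1)⁻¹ * (t^2-1) := by
            rw [← h2]; exact mul_le_mul_of_nonneg_right this h3.le
        _ = t + 1 := by field_simp; ring
        _ ≤ (t+1) + (t^2-1) := by linarith
  have key : ((t+1) ^ (-(2*l)) + (t-1) ^ (-(2*l))) * (t^2 - 1) ≤ 4 * t^2 := by
    have h1' : (t+1) ^ (-(2*l)) * (t^2-1) ≤ t^2 - 1 := by
      nlinarith [Real.rpow_nonneg (show (0:ℝ) ≤ t+1 by linarith) (-(2*l))]
    nlinarith
  have := Real.exp_pos (-t^2/2)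
  calc phi l t = ((t+1) ^ (-(2*l)) + (t-1) ^ (-(2*l))) * (t^2 - 1) * Real.exp (-t^2/2) := rfl
    _ ≤ 4 * t^2 * Real.exp (-t^2/2) := mul_le_mul_of_nonneg_right key this.le
    _ = Dbd t := rfl

lemma Dbd_integrable : IntegrableOn Dbd (Ioi 1) := by
  have h := (integrable_rpow_mul_exp_neg_mul_sq (b := 1/2) one_half_pos
    (s := 2) (by norm_num)).const_mul 4
  have : (fun x : ℝ => 4 * (x ^ (2:ℝ) * Real.exp (-(1/2) * x ^ 2))) = Dbd := by
    funext x
    rw [show ((2:ℝ) = ((2:ℕ):ℝ)) by norm_num, Real.rpow_natCast]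
    unfold Dbd; ring_nf
  rw [this] at h
  exact h.integrableOn

lemma phi_meas (l : ℝ) : Measurable (phi l) := by
  unfold phi
  fun_prop


lemma phi_bound_ae {l : ℝ} (hl : l ∈ Icc (0:ℝ) (1/2)) :
    ∀ᵐ t ∂(volume.restrict (Ioi (1:ℝ))), ‖phi l t‖ ≤ Dbd t := by
  rw [ae_restrict_iff' measurableSet_Ioi]
  filter_upwards with t ht
  rw [Real.norm_eq_abs, abs_of_nonneg (phi_nonneg ht)]
  exact phi_le hl ht

lemma phi_integrable {l : ℝ} (hl : l ∈ Icc (0:ℝ) (1/2)) :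
    IntegrableOn (phi l) (Ioi 1) := by
  exact Integrable.mono' Dbd_integrable (phi_meas l).aestronglyMeasurable (phi_bound_ae hl)

lemma rpow_comb_lt {p a b x y : ℝ} (hp : 1 < p) (ha : 0 < a) (hb : 0 < b)
    (hab : a + b = 1) (hxy : x ≠ y) :
    p ^ (-(2*(a*x+b*y))) < a * p ^ (-(2*x)) + b * p ^ (-(2*y)) := by
  have hp0 : (0:ℝ) < p := by linarith
  rw [Real.rpow_def_of_pos hp0, Real.rpow_def_of_pos hp0, Real.rpow_def_of_pos hp0]
  have hlog : Real.log p ≠ 0 := ne_of_gt (Real.log_pos hp)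
  have hne : Real.log p * (-(2*x)) ≠ Real.log p * (-(2*y)) := by
    intro h
    apply hxy
    have := mul_left_cancel₀ hlog h
    linarith
  have := strictConvexOn_exp.2 (Set.mem_univ (Real.log p * (-(2*x))))
    (Set.mem_univ (Real.log p * (-(2*y)))) hne ha hb hab
  simp only [smul_eq_mul] at this
  convert this using 2
  · rfl
  ring

lemma rpow_comb_le {p a b x y : ℝ} (hp : 0 < p) (ha : 0 ≤ a) (hb : 0 ≤ b)
    (hab : a + b = 1) :
    p ^ (-(2*(a*x+b*y))) ≤ a * p ^ (-(2*x)) + b * p ^ (-(2*y)) := by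
  rw [Real.rpow_def_of_pos hp, Real.rpow_def_of_pos hp, Real.rpow_def_of_pos hp]
  have := convexOn_exp.2 (Set.mem_univ (Real.log p * (-(2*x))))
    (Set.mem_univ (Real.log p * (-(2*y)))) ha hb hab
  simp only [smul_eq_mul] at this
  convert this using 2
  · rfl
  ring

lemma phi_strict {x y a b t : ℝ} (hxy : x ≠ y) (ha : 0 < a) (hb : 0 < b)
    (hab : a + b = 1) (ht : t ∈ Ioi (1:ℝ)) :
    phi (a*x+b*y) t < a * phi x t + b * phi y t := by
  have ht1 : (1:ℝ) < t := ht
  have h3 : (0:ℝ) < t^2 - 1 := by nlinarith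
  have he := Real.exp_pos (-t^2/2)
  have h1 := rpow_comb_lt (p := t+1) (by linarith) ha hb hab hxy
  have h2 := rpow_comb_le (p := t-1) (by linarith) ha.le hb.le hab (x := x) (y := y)
  unfold phi
  have hpos : (0:ℝ) < (t^2-1) * Real.exp (-t^2/2) := mul_pos h3 he
  nlinarith [mul_lt_mul_of_pos_right (add_lt_add_of_lt_of_le h1 h2) hpos]


lemma integral_strict {x y a b : ℝ} (hx : x ∈ Ioo (0:ℝ) (1/2)) (hy : y ∈ Ioo (0:ℝ) (1/2))
    (hxy : x ≠ y) (ha : 0 < a) (hb : 0 < b) (hab : a + b = 1) :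
    ∫ t in Ioi (1:ℝ), phi (a*x+b*y) t <
      a * (∫ t in Ioi (1:ℝ), phi x t) + b * (∫ t in Ioi (1:ℝ), phi y t) := by
  have hx' : x ∈ Icc (0:ℝ) (1/2) := Ioo_subset_Icc_self hx
  have hy' : y ∈ Icc (0:ℝ) (1/2) := Ioo_subset_Icc_self hy
  have hm' : a*x+b*y ∈ Icc (0:ℝ) (1/2) := by
    constructor
    · nlinarith [hx.1, hy.1]
    · nlinarith [hx.2, hy.2]
  have hIx := phi_integrable hx'
  have hIy := phi_integrable hy'
  have hIm := phi_integrable hm'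
  have hI1 : IntegrableOn (fun t => a * phi x t + b * phi y t) (Ioi 1) :=
    (hIx.const_mul a).add (hIy.const_mul b)
  set h : ℝ → ℝ := fun t => a * phi x t + b * phi y t - phi (a*x+b*y) t with hh
  have hIh : IntegrableOn h (Ioi 1) := hI1.sub hIm
  have hpos : ∀ t ∈ Ioi (1:ℝ), 0 < h t := fun t ht => by
    simpa [hh] using sub_pos.mpr (phi_strict hxy ha hb hab ht)
  have h0 : 0 < ∫ t in Ioi (1:ℝ), h t := by
    rw [setIntegral_pos_iff_support_of_nonneg_ae ?_ hIh]
    · refine lt_of_lt_of_le ?_ (measure_mono (fun t ht => ⟨ne_of_gt (hpos t ht), ht⟩))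
      rw [Real.volume_Ioi]
      exact ENNReal.zero_lt_top
    · filter_upwards [ae_restrict_mem measurableSet_Ioi] with t ht using (hpos t ht).le
  have hsplit : ∫ t in Ioi (1:ℝ), h t =
      (a * (∫ t in Ioi (1:ℝ), phi x t) + b * (∫ t in Ioi (1:ℝ), phi y t))
        - ∫ t in Ioi (1:ℝ), phi (a*x+b*y) t := by
    rw [integral_sub hI1 hIm,
      integral_add (hIx.const_mul a) (hIy.const_mul b),
      integral_const_mul, integral_const_mul]
  linarith [hsplit ▸ h0]

lemma integral_lim_one : ∫ t in Ioi (1:ℝ), 2*(t^2-1)*Real.exp (-t^2/2) = 2 * Real.exp (-(1/2)) := by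
  have hderiv : ∀ t ∈ Ici (1:ℝ),
      HasDerivAt (fun t : ℝ => -2*t*Real.exp (-t^2/2)) (2*(t^2-1)*Real.exp (-t^2/2)) t := by
    intro t _
    have h1 : HasDerivAt (fun t : ℝ => -t^2/2) (-t) t := by
      have := ((hasDerivAt_pow 2 t).neg).div_const 2
      simpa using this.congr_deriv (by push_cast; ring)
    have h2 := h1.exp
    have h3 := (hasDerivAt_id t).const_mul (-2:ℝ)
    have := h3.mul h2
    exact this.congr_deriv (by simp only [id]; ring)
  have hint : IntegrableOn (fun t : ℝ => 2*(t^2-1)*Real.exp (-t^2/2)) (Ioi 1) := by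
    have h1 := (integrable_rpow_mul_exp_neg_mul_sq (b := 1/2) one_half_pos
      (s := 2) (by norm_num)).const_mul 2
    have h2 := (integrable_exp_neg_mul_sq (b := (1/2:ℝ)) one_half_pos).const_mul 2
    have h3 := h1.sub h2
    have heq : ((fun x : ℝ => 2 * (x ^ (2:ℝ) * Real.exp (-(1/2) * x ^ 2)))
        - (fun x : ℝ => 2 * Real.exp (-(1/2) * x ^ 2))) = fun t => 2*(t^2-1)*Real.exp (-t^2/2) := by
      funext x
      simp only [Pi.sub_apply]
      rw [show ((2:ℝ) = ((2:ℕ):ℝ)) by norm_num, Real.rpow_natCast]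
      ring_nf
    rw [heq] at h3
    exact h3.integrableOn
  have htend : Tendsto (fun t : ℝ => -2*t*Real.exp (-t^2/2)) atTop (nhds 0) := by
    have h1 : Tendsto (fun t : ℝ => t * Real.exp (-t^2/2)) atTop (nhds 0) := by
      apply squeeze_zero' (g := fun t : ℝ => t * Real.exp (-t))
      · filter_upwards [eventually_ge_atTop (0:ℝ)] with t ht
        positivity
      · filter_upwards [eventually_ge_atTop (2:ℝ)] with t ht
        have : -t^2/2 ≤ -t := by nlinarith
        exact mul_le_mul_of_nonneg_left (Real.exp_le_exp.mpr this) (by linarith)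
      · have := Real.tendsto_pow_mul_exp_neg_atTop_nhds_zero 1
        simpa using this
    have := h1.const_mul (-2:ℝ)
    simpa [mul_assoc] using this
  have := integral_Ioi_of_hasDerivAt_of_tendsto' hderiv hint htend
  rw [this]
  norm_num

lemma integral_lim_two : ∫ t in Ioi (1:ℝ), 2*t*Real.exp (-t^2/2) = 2 * Real.exp (-(1/2)) := by
  have hderiv : ∀ t ∈ Ici (1:ℝ),
      HasDerivAt (fun t : ℝ => -2*Real.exp (-t^2/2)) (2*t*Real.exp (-t^2/2)) t := by
    intro t _
    have h1 : HasDerivAt (fun t : ℝ => -t^2/2) (-t) t := by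
      have := ((hasDerivAt_pow 2 t).neg).div_const 2
      simpa using this.congr_deriv (by push_cast; ring)
    have := h1.exp.const_mul (-2:ℝ)
    exact this.congr_deriv (by ring)
  have hint : IntegrableOn (fun t : ℝ => 2*t*Real.exp (-t^2/2)) (Ioi 1) := by
    have h1 := (integrable_rpow_mul_exp_neg_mul_sq (b := 1/2) one_half_pos
      (s := 1) (by norm_num)).const_mul 2
    have heq : (fun x : ℝ => 2 * (x ^ (1:ℝ) * Real.exp (-(1/2) * x ^ 2)))
        = fun t => 2*t*Real.exp (-t^2/2) := by
      funext x
      rw [Real.rpow_one]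
      ring_nf
    rw [heq] at h1
    exact h1.integrableOn
  have htend : Tendsto (fun t : ℝ => -2*Real.exp (-t^2/2)) atTop (nhds 0) := by
    have h1 : Tendsto (fun t : ℝ => -t^2/2) atTop atBot := by
      have h2 : Tendsto (fun t : ℝ => t^2/2) atTop atTop :=
        (tendsto_pow_atTop two_ne_zero).atTop_div_const (by norm_num)
      have h3 := tendsto_neg_atTop_atBot.comp h2
      exact h3.congr fun x => by show -(x^2/2) = -x^2/2; ring
    have := (Real.tendsto_exp_atBot.comp h1).const_mul (-2:ℝ)
    simpa using this
  have := integral_Ioi_of_hasDerivAt_of_tendsto' hderiv hint htend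
  rw [this]
  norm_num


lemma tendsto_phi_pt {t : ℝ} (ht : t ∈ Ioi (1:ℝ)) (l₀ : ℝ) :
    Tendsto (fun l => phi l t) (nhds l₀) (nhds (phi l₀ t)) := by
  have ht1 : (1:ℝ) < t := ht
  have hc : Continuous fun l : ℝ => phi l t := by
    unfold phi
    have h1 : Continuous fun l : ℝ => (t+1) ^ (-(2*l)) := by
      simp only [Real.rpow_def_of_pos (show (0:ℝ) < t+1 by linarith)]
      fun_prop
    have h2 : Continuous fun l : ℝ => (t-1) ^ (-(2*l)) := by
      simp only [Real.rpow_def_of_pos (show (0:ℝ) < t-1 by linarith)]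
      fun_prop
    exact ((h1.add h2).mul continuous_const).mul continuous_const
  exact hc.tendsto l₀

lemma phi_zero {t : ℝ} (ht : t ∈ Ioi (1:ℝ)) :
    phi 0 t = 2*(t^2-1)*Real.exp (-t^2/2) := by
  unfold phi
  norm_num

lemma phi_half {t : ℝ} (ht : t ∈ Ioi (1:ℝ)) :
    phi (1/2) t = 2*t*Real.exp (-t^2/2) := by
  have ht1 : (1:ℝ) < t := ht
  unfold phi
  rw [show -(2*(1/2:ℝ)) = -1 by norm_num, Real.rpow_neg_one, Real.rpow_neg_one]
  have h1 : t + 1 ≠ 0 := by linarith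
  have h2 : t - 1 ≠ 0 := by linarith
  field_simp
  ring

lemma g_lim_zero :
    Tendsto (fun l => ∫ t in Ioi (1:ℝ), phi l t) (nhdsWithin 0 (Ioi 0))
      (nhds (2 * Real.exp (-(1/2)))) := by
  rw [← integral_lim_one]
  apply tendsto_integral_filter_of_dominated_convergence Dbd
  · exact Eventually.of_forall fun l => (phi_meas l).aestronglyMeasurable
  · filter_upwards [Ioo_mem_nhdsGT_of_mem (show (0:ℝ) ∈ Ico 0 (1/2) by norm_num)]
      with l hl
    exact phi_bound_ae (Ioo_subset_Icc_self hl)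
  · exact Dbd_integrable
  · filter_upwards [ae_restrict_mem measurableSet_Ioi] with t ht
    have := (tendsto_phi_pt ht 0).mono_left (nhdsWithin_le_nhds (s := Ioi 0))
    rwa [phi_zero ht] at this

lemma g_lim_half :
    Tendsto (fun l => ∫ t in Ioi (1:ℝ), phi l t) (nhdsWithin (1/2) (Iio (1/2)))
      (nhds (2 * Real.exp (-(1/2)))) := by
  rw [← integral_lim_two]
  apply tendsto_integral_filter_of_dominated_convergence Dbd
  · exact Eventually.of_forall fun l => (phi_meas l).aestronglyMeasurable
  · filter_upwards [Ioo_mem_nhdsLT_of_mem (show (1/2:ℝ) ∈ Ioc 0 (1/2) by norm_num)]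
      with l hl
    exact phi_bound_ae (Ioo_subset_Icc_self hl)
  · exact Dbd_integrable
  · filter_upwards [ae_restrict_mem measurableSet_Ioi] with t ht
    have := (tendsto_phi_pt ht (1/2)).mono_left (nhdsWithin_le_nhds (s := Iio (1/2)))
    rwa [phi_half ht] at this


theorem stmt_10
    (g : ℝ → ℝ)
    (hg : ∀ l : ℝ, g l =
      ∫ t in Ioi (1:ℝ), ((t+1) ^ (-(2*l)) + (t-1) ^ (-(2*l))) * (t^2 - 1) * Real.exp (-t^2/2)) :
    StrictConvexOn ℝ (Ioo 0 (1/2)) g ∧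
    Tendsto g (nhdsWithin 0 (Ioi 0)) (nhds (2 * Real.exp (-(1/2)))) ∧
    Tendsto g (nhdsWithin (1/2) (Iio (1/2))) (nhds (2 * Real.exp (-(1/2)))) ∧
    ∀ l ∈ Ioo (0:ℝ) (1/2), g l < 2 * Real.exp (-(1/2)) := by
  have hgφ : ∀ l, g l = ∫ t in Ioi (1:ℝ), phi l t := fun l => by rw [hg l]; rfl
  have hgfun : g = fun l => ∫ t in Ioi (1:ℝ), phi l t := funext hgφ
  set L := 2 * Real.exp (-(1/2)) with hL
  have hstrict : StrictConvexOn ℝ (Ioo 0 (1/2)) g := by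
    refine ⟨convex_Ioo _ _, fun x hx y hy hxy a b ha hb hab => ?_⟩
    simp only [smul_eq_mul]
    rw [hgφ, hgφ, hgφ]
    exact integral_strict hx hy hxy ha hb hab
  have hlim0 : Tendsto g (nhdsWithin 0 (Ioi 0)) (nhds L) := by
    rw [hgfun]; exact g_lim_zero
  have hlimh : Tendsto g (nhdsWithin (1/2) (Iio (1/2))) (nhds L) := by
    rw [hgfun]; exact g_lim_half
  have hconv : ConvexOn ℝ (Ioo 0 (1/2)) g := hstrict.convexOn
  -- non-strict bound
  have hle : ∀ m ∈ Ioo (0:ℝ) (1/2), g m ≤ L := by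
    intro m hm
    have hδ0 : (0:ℝ) < min (min m (1/2 - m)) (1/8) :=
      lt_min (lt_min hm.1 (by linarith [hm.2])) (by norm_num)
    set δ := min (min m (1/2 - m)) (1/8) with hδ
    have hev : ∀ᶠ ε in nhdsWithin (0:ℝ) (Ioi 0),
        g m ≤ ((1/2 - ε - m)/(1/2 - 2*ε)) * g ε
          + (1 - (1/2 - ε - m)/(1/2 - 2*ε)) * g (1/2 - ε) := by
      filter_upwards [Ioo_mem_nhdsGT_of_mem (show (0:ℝ) ∈ Ico 0 δ from ⟨le_refl _, hδ0⟩)]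
        with ε hε
      obtain ⟨hε0, hεδ⟩ := hε
      have hεm : ε < m := lt_of_lt_of_le hεδ ((min_le_left _ _).trans (min_le_left _ _))
      have hεm2 : ε < 1/2 - m := lt_of_lt_of_le hεδ ((min_le_left _ _).trans (min_le_right _ _))
      have hε8 : ε < 1/8 := lt_of_lt_of_le hεδ (min_le_right _ _)
      have hden : (0:ℝ) < 1/2 - 2*ε := by linarith
      have hw0 : 0 ≤ (1/2 - ε - m)/(1/2 - 2*ε) := div_nonneg (by linarith) hden.le
      have hw1 : (1/2 - ε - m)/(1/2 - 2*ε) ≤ 1 := by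
        rw [div_le_one hden]; linarith
      have hcan : (1/2 - ε - m)/(1/2 - 2*ε) * (1/2 - 2*ε) = 1/2 - ε - m :=
        div_mul_cancel₀ _ (ne_of_gt hden)
      have key := hconv.2 (show ε ∈ Ioo (0:ℝ) (1/2) from ⟨hε0, by linarith [hm.2]⟩)
        (show 1/2 - ε ∈ Ioo (0:ℝ) (1/2) from ⟨by linarith, by linarith⟩)
        hw0 (by linarith : (0:ℝ) ≤ 1 - (1/2 - ε - m)/(1/2 - 2*ε)) (by ring)
      simp only [smul_eq_mul] at key
      have hpt : (1/2 - ε - m)/(1/2 - 2*ε) * ε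
          + (1 - (1/2 - ε - m)/(1/2 - 2*ε)) * (1/2 - ε) = m := by nlinarith [hcan]
      rwa [hpt] at key
    have hw : Tendsto (fun ε : ℝ => (1/2 - ε - m)/(1/2 - 2*ε)) (nhdsWithin 0 (Ioi 0))
        (nhds (1 - 2*m)) := by
      have hc : ContinuousAt (fun ε : ℝ => (1/2 - ε - m)/(1/2 - 2*ε)) 0 := by
        apply ContinuousAt.div
        · fun_prop
        · fun_prop
        · norm_num
      have := hc.tendsto.mono_left (nhdsWithin_le_nhds (s := Ioi 0))
      have hval : (1/2 - (0:ℝ) - m)/(1/2 - 2*0) = 1 - 2*m := by norm_num; ring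
      rwa [hval] at this
    have hmap : Tendsto (fun ε : ℝ => 1/2 - ε) (nhdsWithin 0 (Ioi 0))
        (nhdsWithin (1/2) (Iio (1/2))) := by
      apply tendsto_nhdsWithin_of_tendsto_nhds_of_eventually_within
      · have hc : ContinuousAt (fun ε : ℝ => 1/2 - ε) 0 := by fun_prop
        have := hc.tendsto.mono_left (nhdsWithin_le_nhds (s := Ioi 0))
        simpa using this
      · filter_upwards [self_mem_nhdsWithin] with ε hε
        have : (0:ℝ) < ε := hε
        show (1:ℝ)/2 - ε ∈ Iio (1/2)
        simp only [mem_Iio]; linarith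
    have hg2 : Tendsto (fun ε : ℝ => g (1/2 - ε)) (nhdsWithin 0 (Ioi 0)) (nhds L) :=
      hlimh.comp hmap
    have hrhs : Tendsto (fun ε : ℝ => ((1/2 - ε - m)/(1/2 - 2*ε)) * g ε
        + (1 - (1/2 - ε - m)/(1/2 - 2*ε)) * g (1/2 - ε)) (nhdsWithin 0 (Ioi 0))
        (nhds ((1 - 2*m) * L + (1 - (1 - 2*m)) * L)) :=
      (hw.mul hlim0).add ((tendsto_const_nhds.sub hw).mul hg2)
    have hval : (1 - 2*m) * L + (1 - (1 - 2*m)) * L = L := by ring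
    rw [hval] at hrhs
    exact ge_of_tendsto hrhs hev
  refine ⟨hstrict, hlim0, hlimh, ?_⟩
  intro l hl
  have hδ0 : (0:ℝ) < min l (1/2 - l) / 2 := by
    have := hl.1; have := hl.2
    have : (0:ℝ) < min l (1/2 - l) := lt_min hl.1 (by linarith [hl.2])
    linarith
  set δ := min l (1/2 - l) / 2 with hδ
  have hδl : δ ≤ l / 2 := by
    have := min_le_left l (1/2 - l); rw [hδ]; linarith
  have hδr : δ ≤ (1/2 - l) / 2 := by
    have := min_le_right l (1/2 - l); rw [hδ]; linarith
  have hp : l - δ ∈ Ioo (0:ℝ) (1/2) := ⟨by linarith [hl.1], by linarith [hl.2]⟩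
  have hq : l + δ ∈ Ioo (0:ℝ) (1/2) := ⟨by linarith [hl.1], by linarith [hl.2]⟩
  have key := hstrict.2 hp hq (by intro h; nlinarith [hδ0] : l - δ ≠ l + δ)
    one_half_pos one_half_pos (by norm_num)
  simp only [smul_eq_mul] at key
  have hpt : 1/2 * (l - δ) + 1/2 * (l + δ) = l := by ring
  rw [hpt] at key
  have h1 := hle _ hp
  have h2 := hle _ hq
  linarith
end

section
/- Define h(λ) = ∫₀^1 ((t+1)^{-2λ} + (1−t)^{-2λ})(t²−1)exp(−t²/2) dt for λ ∈ (0, 1/2). Then h is strictly decreasing on (0, 1/2) and h(λ) < lim_{μ→0⁺} h(μ) = −2·exp(−1/2) for all λ ∈ (0, 1/2). -/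
open Real MeasureTheory Set Filter

noncomputable def Fi (l t : ℝ) : ℝ :=
  ((t+1) ^ (-(2*l)) + (1-t) ^ (-(2*l))) * (t^2 - 1) * Real.exp (-t^2/2)

lemma Fi_rewrite {l : ℝ} (hl : l < 1/2) {t : ℝ} (ht : t ∈ Icc (0:ℝ) 1) :
    Fi l t = -(((t+1) ^ (-(2*l)) * (1-t) + (1-t) ^ (1-2*l)) * (1+t)) * Real.exp (-t^2/2) := by
  rcases eq_or_lt_of_le ht.2 with h1 | h1
  · subst h1
    have h2 : (1:ℝ) - 1 = 0 := by norm_num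
    have h3 : (0:ℝ) ^ (1-2*l) = 0 := Real.zero_rpow (by linarith)
    simp only [Fi, h2, h3]
    ring
  · have hpos : 0 < 1 - t := by linarith
    have hB : (1-t) ^ (1-2*l) = (1-t) ^ (-(2*l)) * (1-t) := by
      rw [show (1-2*l) = -(2*l) + 1 by ring, Real.rpow_add hpos, Real.rpow_one]
    rw [Fi, hB]; ring

lemma Fi_contOn {l : ℝ} (hl : l < 1/2) : ContinuousOn (Fi l) (Icc 0 1) := by
  have : ContinuousOn (fun t : ℝ =>
      -(((t+1) ^ (-(2*l)) * (1-t) + (1-t) ^ (1-2*l)) * (1+t)) * Real.exp (-t^2/2))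
      (Icc 0 1) := by
    apply ContinuousOn.mul
    · apply ContinuousOn.neg
      apply ContinuousOn.mul _ (by fun_prop)
      apply ContinuousOn.add
      · apply ContinuousOn.mul _ (by fun_prop)
        apply ContinuousOn.rpow_const (by fun_prop)
        intro x hx
        simp only [mem_Icc] at hx
        exact Or.inl (ne_of_gt (by linarith [hx.1]))
      · apply ContinuousOn.rpow_const (by fun_prop)
        intro x hx
        exact Or.inr (by linarith)
    · fun_prop
  exact ContinuousOn.congr this (fun t ht => Fi_rewrite hl ht)

lemma phi_mono {a b t : ℝ} (ha : 0 ≤ a) (hab : a < b) (ht : t ∈ Ioo (0:ℝ) 1) :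
    (t+1) ^ (-(2*a)) + (1-t) ^ (-(2*a)) < (t+1) ^ (-(2*b)) + (1-t) ^ (-(2*b)) := by
  obtain ⟨ht0, ht1⟩ := ht
  have hr : (1:ℝ) < t + 1 := by linarith
  have hs0 : 0 < 1 - t := by linarith
  have hs1 : 1 - t < 1 := by linarith
  set y := Real.log (t+1) with hy
  set x := Real.log (1-t) with hx
  have hy0 : 0 < y := Real.log_pos hr
  have hx0 : x < 0 := Real.log_neg hs0 hs1
  have hxy : y < -x := by
    have : x + y = Real.log ((1-t)*(t+1)) := (Real.log_mul (ne_of_gt hs0) (by linarith)).symm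
    have hlt : (1-t)*(t+1) < 1 := by nlinarith
    have : x + y < 0 := this ▸ Real.log_neg (by positivity) hlt
    linarith
  have e1 : (t+1) ^ (-(2*a)) = Real.exp (-(2*a)*y) := by
    rw [Real.rpow_def_of_pos (by linarith), mul_comm]
  have e2 : (t+1) ^ (-(2*b)) = Real.exp (-(2*b)*y) := by
    rw [Real.rpow_def_of_pos (by linarith), mul_comm]
  have e3 : (1-t) ^ (-(2*a)) = Real.exp (-(2*a)*x) := by
    rw [Real.rpow_def_of_pos hs0, mul_comm]
  have e4 : (1-t) ^ (-(2*b)) = Real.exp (-(2*b)*x) := by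
    rw [Real.rpow_def_of_pos hs0, mul_comm]
  rw [e1, e2, e3, e4]
  have d1 : Real.exp (-(2*a)*y) = Real.exp (-(2*b)*y) * Real.exp (2*(b-a)*y) := by
    rw [← Real.exp_add]; ring_nf
  have d2 : Real.exp (-(2*b)*x) = Real.exp (-(2*a)*x) * Real.exp (2*(b-a)*(-x)) := by
    rw [← Real.exp_add]; ring_nf
  rw [d1, d2]
  set P := Real.exp (-(2*b)*y)
  set Q := Real.exp (-(2*a)*x)
  set K1 := Real.exp (2*(b-a)*y)
  set K2 := Real.exp (2*(b-a)*(-x))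
  have hP : P < 1 := Real.exp_lt_one_iff.mpr (by nlinarith)
  have hP0 : 0 < P := Real.exp_pos _
  have hQ : 1 ≤ Q := Real.one_le_exp (by nlinarith)
  have hK1 : 1 < K1 := Real.one_lt_exp_iff.mpr (by nlinarith)
  have hK12 : K1 < K2 := Real.exp_lt_exp.mpr (by nlinarith)
  nlinarith [mul_pos (sub_pos.2 hP) (sub_pos.2 hK1),
    mul_nonneg (sub_nonneg.2 hQ) (le_of_lt (sub_pos.2 (hK1.trans hK12)))]

lemma Fi_strict {a b t : ℝ} (ha : 0 ≤ a) (hab : a < b) (ht : t ∈ Ioo (0:ℝ) 1) :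
    Fi b t < Fi a t := by
  have hneg : t^2 - 1 < 0 := by nlinarith [ht.1, ht.2]
  have hexp : 0 < Real.exp (-t^2/2) := Real.exp_pos _
  have := phi_mono ha hab ht
  unfold Fi
  have := mul_lt_mul_of_neg_right this hneg
  exact mul_lt_mul_of_pos_right this hexp

lemma Fi_one (l : ℝ) : Fi l 1 = 0 := by simp [Fi]

lemma integral_strict_s11 {a b : ℝ} (ha : 0 ≤ a) (hab : a < b) (hb : b < 1/2) :
    (∫ t in (0:ℝ)..1, Fi b t) < ∫ t in (0:ℝ)..1, Fi a t := by
  apply intervalIntegral.integral_lt_integral_of_continuousOn_of_le_of_exists_lt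
    one_pos (Fi_contOn hb) (Fi_contOn (lt_trans hab hb))
  · intro x hx
    rcases eq_or_lt_of_le hx.2 with h1 | h1
    · subst h1; simp [Fi_one]
    · exact le_of_lt (Fi_strict ha hab ⟨hx.1, h1⟩)
  · exact ⟨1/2, by norm_num, Fi_strict ha hab (by norm_num)⟩

lemma Fi_zero (t : ℝ) : Fi 0 t = (2*t^2 - 2) * Real.exp (-t^2/2) := by
  simp only [Fi, mul_zero, neg_zero, Real.rpow_zero]
  ring

lemma hasDeriv_aux (t : ℝ) :
    HasDerivAt (fun t : ℝ => -2*t*Real.exp (-t^2/2)) ((2*t^2 - 2) * Real.exp (-t^2/2)) t := by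
  have h1 : HasDerivAt (fun t : ℝ => -t^2/2) (-t) t := by
    have := ((hasDerivAt_pow 2 t).neg.div_const 2)
    refine this.congr_deriv ?_; push_cast; ring
  have h2 : HasDerivAt (fun t : ℝ => -2*t) (-2) t := by
    simpa using (hasDerivAt_id t).const_mul (-2 : ℝ)
  have := h2.mul h1.exp
  exact this.congr_deriv (by ring)

lemma integral_Fi_zero : (∫ t in (0:ℝ)..1, Fi 0 t) = -2 * Real.exp (-(1/2)) := by
  have hcongr : (∫ t in (0:ℝ)..1, Fi 0 t)
      = ∫ t in (0:ℝ)..1, (2*t^2 - 2) * Real.exp (-t^2/2) :=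
    intervalIntegral.integral_congr (fun t _ => Fi_zero t)
  rw [hcongr, intervalIntegral.integral_eq_sub_of_hasDerivAt
    (fun t _ => hasDeriv_aux t)
    (Continuous.intervalIntegrable (by fun_prop) 0 1)]
  norm_num

lemma Fi_meas (l : ℝ) : AEStronglyMeasurable (Fi l) (volume.restrict (uIoc (0:ℝ) 1)) := by
  apply Measurable.aestronglyMeasurable
  unfold Fi
  apply Measurable.mul _ (by fun_prop)
  apply Measurable.mul _ (by fun_prop)
  exact ((measurable_id.add measurable_const).pow measurable_const).add
    ((measurable_const.sub measurable_id).pow measurable_const)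

lemma Fi_bound {l t : ℝ} (hl : l ∈ Ioo (0:ℝ) (1/2)) (ht : t ∈ Ioc (0:ℝ) 1) :
    ‖Fi l t‖ ≤ 4 := by
  obtain ⟨hl0, hl2⟩ := hl
  obtain ⟨ht0, ht1⟩ := ht
  rw [Fi_rewrite hl2 ⟨le_of_lt ht0, ht1⟩]
  set A := (t+1) ^ (-(2*l)) with hA
  set C := (1-t) ^ (1-2*l) with hC
  have hA0 : 0 ≤ A := Real.rpow_nonneg (by linarith) _
  have hA1 : A ≤ 1 := Real.rpow_le_one_of_one_le_of_nonpos (by linarith) (by linarith)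
  have hC0 : 0 ≤ C := Real.rpow_nonneg (by linarith) _
  have hC1 : C ≤ 1 := Real.rpow_le_one (by linarith) (by linarith) (by linarith)
  have he1 : Real.exp (-t^2/2) ≤ 1 := Real.exp_le_one_iff.mpr (by nlinarith)
  have he0 : 0 < Real.exp (-t^2/2) := Real.exp_pos _
  have hX0 : 0 ≤ (A*(1-t) + C) * (1+t) := by
    apply mul_nonneg _ (by linarith)
    have : 0 ≤ A * (1-t) := mul_nonneg hA0 (by linarith)
    linarith
  rw [Real.norm_eq_abs, abs_mul, abs_neg, abs_of_nonneg hX0, abs_of_nonneg he0.le]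
  have hXt : (A*(1-t) + C) * (1+t) ≤ 4 := by nlinarith
  calc (A*(1-t) + C) * (1+t) * Real.exp (-t^2/2) ≤ 4 * 1 :=
        mul_le_mul hXt he1 he0.le (by norm_num)
    _ = 4 := by norm_num

lemma Fi_tendsto_int :
    Tendsto (fun l => ∫ t in (0:ℝ)..1, Fi l t) (nhdsWithin 0 (Ioi 0))
      (nhds (-2 * Real.exp (-(1/2)))) := by
  rw [← integral_Fi_zero]
  apply intervalIntegral.tendsto_integral_filter_of_dominated_convergence (fun _ => (4:ℝ))
  · exact Filter.Eventually.of_forall (fun l => Fi_meas l)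
  · filter_upwards [Ioo_mem_nhdsGT_of_mem (by norm_num : (0:ℝ) ∈ Ico (0:ℝ) (1/2))] with l hl
    refine Filter.Eventually.of_forall (fun t ht => ?_)
    rw [uIoc_of_le (by norm_num : (0:ℝ) ≤ 1)] at ht
    exact Fi_bound hl ht
  · exact intervalIntegrable_const
  · refine Filter.Eventually.of_forall (fun t ht => ?_)
    rw [uIoc_of_le (by norm_num : (0:ℝ) ≤ 1)] at ht
    rcases eq_or_lt_of_le ht.2 with h1 | h1
    · subst h1
      simp only [Fi_one]
      exact tendsto_const_nhds
    · have h1t : (0:ℝ) < 1 - t := by linarith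
      have c1 : Continuous fun l : ℝ => (t+1) ^ (-(2*l)) :=
        continuous_const.rpow (by fun_prop) (fun x => Or.inl (ne_of_gt (by linarith [ht.1])))
      have c2 : Continuous fun l : ℝ => (1-t) ^ (-(2*l)) :=
        continuous_const.rpow (by fun_prop) (fun x => Or.inl (ne_of_gt h1t))
      have hc : Continuous fun l => Fi l t := by
        unfold Fi
        exact ((c1.add c2).mul continuous_const).mul continuous_const
      exact hc.continuousAt.tendsto.mono_left nhdsWithin_le_nhds

theorem stmt_11
    (h : ℝ → ℝ)
    (hh : ∀ l : ℝ, h l =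
      ∫ t in (0:ℝ)..1, ((t+1) ^ (-(2*l)) + (1-t) ^ (-(2*l))) * (t^2 - 1) * Real.exp (-t^2/2)) :
    StrictAntiOn h (Ioo 0 (1/2)) ∧
    Tendsto h (nhdsWithin 0 (Ioi 0)) (nhds (-2 * Real.exp (-(1/2)))) ∧
    ∀ l ∈ Ioo (0:ℝ) (1/2), h l < -2 * Real.exp (-(1/2)) := by
  have hF : ∀ l, h l = ∫ t in (0:ℝ)..1, Fi l t := fun l => hh l
  refine ⟨fun a ha b hb hab => ?_, ?_, fun l hl => ?_⟩
  · rw [hF a, hF b]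
    exact integral_strict_s11 (le_of_lt ha.1) hab hb.2
  · exact Fi_tendsto_int.congr (fun l => (hF l).symm)
  · rw [hF l, ← integral_Fi_zero]
    exact integral_strict_s11 le_rfl hl.1 hl.2
end

section
/- Let λ ∈ (0, 1/2) and φ_λ(x) = ∫₀^∞ y^{-2λ} exp(−(y−x)²/2) dy, with φ_λ''(x) = ∫₀^∞ y^{-2λ}((y−x)² − 1) exp(−(y−x)²/2) dy. If x* ∈ (0,1) is a point where φ_λ''' (x*) = 0, then φ_λ''(x*) < 0. -/
open Real MeasureTheory Set Filter Topology

noncomputable section StmtAux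

namespace Stmt18Aux

/-- polynomial factors -/
def pol : ℕ → ℝ → ℝ
  | 0, _ => 1
  | 1, t => t
  | 2, t => t ^ 2 - 1
  | 3, t => t ^ 3 - 3 * t
  | _, _ => 0

@[simp] lemma pol0 (t : ℝ) : pol 0 t = 1 := rfl
@[simp] lemma pol1 (t : ℝ) : pol 1 t = t := rfl
@[simp] lemma pol2 (t : ℝ) : pol 2 t = t ^ 2 - 1 := rfl
@[simp] lemma pol3 (t : ℝ) : pol 3 t = t ^ 3 - 3 * t := rfl

/-- the integrand kernels -/
def Kf (l : ℝ) (k : ℕ) (x y : ℝ) : ℝ :=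
  y ^ (-(2 * l)) * (pol k (y - x) * Real.exp (-(y - x) ^ 2 / 2))

lemma pol_continuous (k : ℕ) : Continuous (pol k) := by
  match k with
  | 0 => exact continuous_const
  | 1 => exact continuous_id
  | 2 => exact (show Continuous fun t : ℝ => t ^ 2 - 1 by fun_prop)
  | 3 => exact (show Continuous fun t : ℝ => t ^ 3 - 3 * t by fun_prop)
  | (n+4) => exact continuous_const

/-- derivative of the exponential in x -/
lemma exp_hasDerivAt (y x : ℝ) :
    HasDerivAt (fun x => Real.exp (-(y - x) ^ 2 / 2))
      ((y - x) * Real.exp (-(y - x) ^ 2 / 2)) x := by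
  have h1 : HasDerivAt (fun x : ℝ => y - x) (-1) x := (hasDerivAt_id x).const_sub y
  have h2 : HasDerivAt (fun x : ℝ => -(y - x) ^ 2 / 2) (y - x) x := by
    have hfun : (fun x : ℝ => -(y - x) ^ 2 / 2) = fun x : ℝ => -((y - x) ^ 2 / 2) := by
      funext z; ring
    rw [hfun]
    have := ((h1.pow 2).div_const 2).neg
    refine this.congr_deriv ?_
    push_cast
    ring
  have := h2.exp
  convert this using 1
  ring

lemma Kf_hasDerivAt (l : ℝ) (k : ℕ) (hk : k ≤ 2) (y x : ℝ) :
    HasDerivAt (fun x => Kf l k x y) (Kf l (k + 1) x y) x := by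
  have h1 : HasDerivAt (fun x : ℝ => y - x) (-1) x := (hasDerivAt_id x).const_sub y
  have hE := exp_hasDerivAt y x
  interval_cases k
  · unfold Kf
    simp only [pol0, pol1, one_mul]
    exact hE.const_mul _
  · unfold Kf
    simp only [pol1, pol2]
    have := h1.mul hE
    have h2 : HasDerivAt (fun x => (y - x) * Real.exp (-(y - x) ^ 2 / 2))
        (((y - x) ^ 2 - 1) * Real.exp (-(y - x) ^ 2 / 2)) x := by
      refine this.congr_deriv ?_; ring
    exact h2.const_mul _
  · unfold Kf
    simp only [pol2, pol3]
    have hq : HasDerivAt (fun x : ℝ => (y - x) ^ 2 - 1) (-2 * (y - x)) x := by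
      have := (h1.pow 2).sub_const 1
      refine this.congr_deriv ?_; push_cast; ring
    have := hq.mul hE
    have h2 : HasDerivAt (fun x => ((y - x) ^ 2 - 1) * Real.exp (-(y - x) ^ 2 / 2))
        (((y - x) ^ 3 - 3 * (y - x)) * Real.exp (-(y - x) ^ 2 / 2)) x := by
      refine this.congr_deriv ?_; ring
    exact h2.const_mul _

/-- basic bound: |t|^j e^{-t²/4} ≤ 32 for j ≤ 4 -/
lemma pow_mul_exp_le (t : ℝ) {j : ℕ} (hj : j ≤ 4) :
    |t| ^ j * Real.exp (-t ^ 2 / 4) ≤ 32 := by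
  rcases le_or_gt (|t|) 1 with h | h
  · have h1 : |t| ^ j ≤ 1 := pow_le_one₀ (abs_nonneg t) h
    have h2 : Real.exp (-t ^ 2 / 4) ≤ 1 := by
      rw [Real.exp_le_one_iff]
      nlinarith [sq_nonneg t]
    nlinarith [pow_nonneg (abs_nonneg t) j, Real.exp_pos (-t ^ 2 / 4)]
  · have ht0 : t ≠ 0 := by
      intro h0
      rw [h0, abs_zero] at h
      linarith
    have ht4 : (0:ℝ) < t ^ 4 := by positivity
    have hquad : t ^ 4 / 32 ≤ Real.exp (t ^ 2 / 4) := by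
      have := Real.pow_div_factorial_le_exp (x := t ^ 2 / 4) (by positivity) 2
      calc t ^ 4 / 32 = (t ^ 2 / 4) ^ 2 / (Nat.factorial 2) := by
            simp [Nat.factorial]; ring
        _ ≤ Real.exp (t ^ 2 / 4) := this
    have hexp : Real.exp (-t ^ 2 / 4) ≤ 32 / t ^ 4 := by
      rw [show -t ^ 2 / 4 = -(t ^ 2 / 4) by ring, Real.exp_neg]
      rw [inv_le_iff_one_le_mul₀ (Real.exp_pos _)]
      rw [div_mul_eq_mul_div, le_div_iff₀ ht4]
      nlinarith [hquad]
    have hpow : |t| ^ j ≤ t ^ 4 := by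
      calc |t| ^ j ≤ |t| ^ 4 := pow_le_pow_right₀ h.le hj
        _ = t ^ 4 := by rw [← abs_pow, abs_of_nonneg (by positivity)]
    calc |t| ^ j * Real.exp (-t ^ 2 / 4) ≤ t ^ 4 * (32 / t ^ 4) := by
          apply mul_le_mul hpow hexp (Real.exp_pos _).le (by positivity)
      _ = 32 := by field_simp

/-- pointwise bound for the polynomial × gaussian -/
lemma pol_bound (k : ℕ) (t : ℝ) :
    |pol k t * Real.exp (-t ^ 2 / 2)| ≤ 128 * Real.exp (-t ^ 2 / 4) := by
  have hsplit : Real.exp (-t ^ 2 / 2) = Real.exp (-t ^ 2 / 4) * Real.exp (-t ^ 2 / 4) := by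
    rw [← Real.exp_add]; ring_nf
  have hE := Real.exp_pos (-t ^ 2 / 4)
  have h0 := pow_mul_exp_le t (j := 0) (by norm_num)
  have h1 := pow_mul_exp_le t (j := 1) (by norm_num)
  have h2 := pow_mul_exp_le t (j := 2) (by norm_num)
  have h3 := pow_mul_exp_le t (j := 3) (by norm_num)
  simp only [pow_zero, pow_one] at h0 h1 h2 h3
  rw [abs_mul, Real.abs_exp, hsplit, ← mul_assoc]
  have hcore : |pol k t| * Real.exp (-t ^ 2 / 4) ≤ 128 := by
    match k with
    | 0 => simp only [pol0, abs_one, one_mul]; linarith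
    | 1 => simp only [pol1]; linarith
    | 2 =>
      have : |pol 2 t| ≤ |t| ^ 2 + 1 := by
        simp only [pol2]
        calc |t ^ 2 - 1| ≤ |t ^ 2| + |(1:ℝ)| := abs_sub _ _
          _ = |t| ^ 2 + 1 := by rw [abs_pow]; simp
      nlinarith [abs_nonneg (pol 2 t)]
    | 3 =>
      have : |pol 3 t| ≤ |t| ^ 3 + 3 * |t| := by
        simp only [pol3]
        calc |t ^ 3 - 3 * t| ≤ |t ^ 3| + |3 * t| := abs_sub _ _
          _ = |t| ^ 3 + 3 * |t| := by rw [abs_pow, abs_mul]; simp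
      nlinarith [abs_nonneg (pol 3 t)]
    | (n+4) =>
      have : pol (n+4) t = 0 := rfl
      rw [this]
      simpa using by positivity
  exact mul_le_mul_of_nonneg_right hcore hE.le

/-- uniform local bound near x -/
lemma Kf_bound (l : ℝ) (k : ℕ) {x z : ℝ} (hz : |z - x| ≤ 1) {y : ℝ} (hy : 0 < y) :
    ‖Kf l k z y‖ ≤ 128 * Real.exp 1 * (y ^ (-(2 * l)) * Real.exp (-(y - x) ^ 2 / 8)) := by
  have hyp : (0:ℝ) < y ^ (-(2 * l)) := Real.rpow_pos_of_pos hy _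
  rw [Real.norm_eq_abs, Kf, abs_mul, abs_of_pos hyp]
  have h1 : |pol k (y - z) * Real.exp (-(y - z) ^ 2 / 2)| ≤ 128 * Real.exp (-(y - z) ^ 2 / 4) :=
    pol_bound k (y - z)
  have h2 : Real.exp (-(y - z) ^ 2 / 4) ≤ Real.exp 1 * Real.exp (-(y - x) ^ 2 / 8) := by
    rw [← Real.exp_add, Real.exp_le_exp]
    nlinarith [sq_nonneg ((y - z) - (z - x)), sq_abs (z - x), abs_nonneg (z - x),
      sq_nonneg (y - z), sq_nonneg (z - x)]
  calc y ^ (-(2 * l)) * |pol k (y - z) * Real.exp (-(y - z) ^ 2 / 2)|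
      ≤ y ^ (-(2 * l)) * (128 * (Real.exp 1 * Real.exp (-(y - x) ^ 2 / 8))) := by
        apply mul_le_mul_of_nonneg_left _ hyp.le
        calc |pol k (y - z) * Real.exp (-(y - z) ^ 2 / 2)|
            ≤ 128 * Real.exp (-(y - z) ^ 2 / 4) := h1
          _ ≤ 128 * (Real.exp 1 * Real.exp (-(y - x) ^ 2 / 8)) := by
              apply mul_le_mul_of_nonneg_left h2 (by norm_num)
    _ = 128 * Real.exp 1 * (y ^ (-(2 * l)) * Real.exp (-(y - x) ^ 2 / 8)) := by ring

/-- integrability of the dominating function -/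
lemma base_integrable {l : ℝ} (hl : 0 < l) (hl2 : l < 1 / 2) (x : ℝ) :
    IntegrableOn (fun y : ℝ => y ^ (-(2 * l)) * Real.exp (-(y - x) ^ 2 / 8)) (Ioi 0) := by
  have hmeas : ∀ s : Set ℝ, MeasurableSet s → s ⊆ Ioi 0 →
      AEStronglyMeasurable (fun y : ℝ => y ^ (-(2 * l)) * Real.exp (-(y - x) ^ 2 / 8))
        (volume.restrict s) := by
    intro s hs hsub
    apply ContinuousOn.aestronglyMeasurable _ hs
    apply ContinuousOn.mul
    · exact fun y hy => ((Real.continuousAt_rpow_const y _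
        (Or.inl (ne_of_gt (hsub hy)))).continuousWithinAt)
    · exact (Continuous.continuousOn (by fun_prop))
  rw [← Ioc_union_Ioi_eq_Ioi (zero_le_one)]
  apply IntegrableOn.union
  · -- near 0
    have hint : IntegrableOn (fun y : ℝ => y ^ (-(2 * l))) (Ioc (0:ℝ) 1) := by
      have h := intervalIntegral.intervalIntegrable_rpow' (a := 0) (b := 1) (r := -(2 * l)) (by linarith)
      rw [intervalIntegrable_iff, uIoc_of_le zero_le_one] at h
      exact h
    apply Integrable.mono' hint (hmeas _ measurableSet_Ioc Ioc_subset_Ioi_self)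
    filter_upwards [ae_restrict_mem measurableSet_Ioc] with y hy
    have hyp : (0:ℝ) < y ^ (-(2 * l)) := Real.rpow_pos_of_pos hy.1 _
    rw [Real.norm_eq_abs, abs_mul, abs_of_pos hyp, Real.abs_exp]
    nlinarith [Real.exp_le_one_iff.mpr (show -(y - x) ^ 2 / 8 ≤ 0 by nlinarith [sq_nonneg (y - x)]),
      Real.exp_pos (-(y - x) ^ 2 / 8)]
  · -- tail
    have hint : IntegrableOn (fun y : ℝ => Real.exp (-(y - x) ^ 2 / 8)) (Ioi (1:ℝ)) := by
      have h : Integrable (fun y : ℝ => Real.exp (-(1/8 : ℝ) * y ^ 2)) :=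
        integrable_exp_neg_mul_sq (by norm_num)
      have h2 := h.comp_sub_right x
      have h3 : (fun y : ℝ => Real.exp (-(1/8 : ℝ) * (y - x) ^ 2))
          = fun y : ℝ => Real.exp (-(y - x) ^ 2 / 8) := by
        funext y; congr 1; ring
      rw [h3] at h2
      exact h2.integrableOn
    apply Integrable.mono' hint (hmeas _ measurableSet_Ioi
      (fun y hy => (lt_trans one_pos hy : (0:ℝ) < y)))
    filter_upwards [ae_restrict_mem measurableSet_Ioi] with y hy
    have hy0 : (0:ℝ) < y := lt_trans one_pos hy
    have hyp : (0:ℝ) < y ^ (-(2 * l)) := Real.rpow_pos_of_pos hy0 _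
    rw [Real.norm_eq_abs, abs_mul, abs_of_pos hyp, Real.abs_exp]
    have h1 : y ^ (-(2 * l)) ≤ 1 :=
      Real.rpow_le_one_of_one_le_of_nonpos (le_of_lt hy) (by linarith)
    nlinarith [Real.exp_pos (-(y - x) ^ 2 / 8)]

/-- measurability of the kernels -/
lemma Kf_meas (l : ℝ) (k : ℕ) (x : ℝ) :
    AEStronglyMeasurable (fun y => Kf l k x y) (volume.restrict (Ioi (0:ℝ))) := by
  apply ContinuousOn.aestronglyMeasurable _ measurableSet_Ioi
  apply ContinuousOn.mul
  · exact fun y hy => ((Real.continuousAt_rpow_const y _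
      (Or.inl (ne_of_gt hy))).continuousWithinAt)
  · apply Continuous.continuousOn
    apply Continuous.mul
    · exact (pol_continuous k).comp (by fun_prop)
    · fun_prop

/-- integrability of the kernels -/
lemma Kf_integrable {l : ℝ} (hl : 0 < l) (hl2 : l < 1 / 2) (k : ℕ) (x : ℝ) :
    IntegrableOn (fun y => Kf l k x y) (Ioi 0) := by
  apply Integrable.mono' ((base_integrable hl hl2 x).const_mul (128 * Real.exp 1))
    (Kf_meas l k x)
  filter_upwards [ae_restrict_mem measurableSet_Ioi] with y hy
  exact Kf_bound l k (by simp) hy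

/-- differentiation under the integral sign -/
lemma integral_hasDerivAt {l : ℝ} (hl : 0 < l) (hl2 : l < 1 / 2) (k : ℕ) (hk : k ≤ 2) (x : ℝ) :
    HasDerivAt (fun x => ∫ y in Ioi (0:ℝ), Kf l k x y)
      (∫ y in Ioi (0:ℝ), Kf l (k + 1) x y) x := by
  have h := hasDerivAt_integral_of_dominated_loc_of_deriv_le
    (μ := volume.restrict (Ioi (0:ℝ))) (x₀ := x)
    (F := fun x y => Kf l k x y) (F' := fun x y => Kf l (k + 1) x y)
    (bound := fun y => 128 * Real.exp 1 * (y ^ (-(2 * l)) * Real.exp (-(y - x) ^ 2 / 8)))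
    (s := Metric.ball x 1) (Metric.ball_mem_nhds x one_pos)
    (Eventually.of_forall fun z => Kf_meas l k z)
    (Kf_integrable hl hl2 k x)
    (Kf_meas l (k + 1) x)
    ?_ ?_ ?_
  · exact h.2
  · filter_upwards [ae_restrict_mem measurableSet_Ioi] with y hy z hz
    apply Kf_bound l (k + 1) _ hy
    rw [Metric.mem_ball, Real.dist_eq] at hz
    exact hz.le
  · exact ((base_integrable hl hl2 x).const_mul (128 * Real.exp 1))
  · exact Eventually.of_forall fun y => fun z _ => Kf_hasDerivAt l k hk y z

/-- the ODE satisfied by the integrals, via FTC on `Ioi 0` -/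
lemma ode {l : ℝ} (hl : 0 < l) (hl2 : l < 1 / 2) (x : ℝ) :
    (∫ y in Ioi (0:ℝ), Kf l 2 x y) + x * (∫ y in Ioi (0:ℝ), Kf l 1 x y)
      + 2 * l * (∫ y in Ioi (0:ℝ), Kf l 0 x y) = 0 := by
  set F : ℝ → ℝ := fun y => -(y ^ (1 - 2 * l) * Real.exp (-(y - x) ^ 2 / 2)) with hF
  have hle : (0:ℝ) < 1 - 2 * l := by linarith
  -- derivative of F on Ioi 0
  have hderiv : ∀ y ∈ Ioi (0:ℝ),
      HasDerivAt F (Kf l 2 x y + x * Kf l 1 x y + 2 * l * Kf l 0 x y) y := by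
    intro y hy
    have hy0 : (0:ℝ) < y := hy
    have h1 : HasDerivAt (fun y : ℝ => y ^ (1 - 2 * l))
        ((1 - 2 * l) * y ^ (-(2 * l))) y := by
      have := Real.hasDerivAt_rpow_const (x := y) (p := 1 - 2 * l) (Or.inl (ne_of_gt hy0))
      convert this using 2
      ring
    have h2 : HasDerivAt (fun y : ℝ => Real.exp (-(y - x) ^ 2 / 2))
        (-(y - x) * Real.exp (-(y - x) ^ 2 / 2)) y := by
      have hin : HasDerivAt (fun y : ℝ => -(y - x) ^ 2 / 2) (-(y - x)) y := by
        have hfun : (fun y : ℝ => -(y - x) ^ 2 / 2) = fun y : ℝ => -((y - x) ^ 2 / 2) := by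
          funext z; ring
        rw [hfun]
        have := (((hasDerivAt_id y).sub_const x).pow 2).div_const 2 |>.neg
        refine this.congr_deriv ?_
        simp only [id_eq]
        norm_num
      have := hin.exp
      convert this using 1
      ring
    have hmul := (h1.mul h2).neg
    have hyy : y ^ (1 - 2 * l) = y * y ^ (-(2 * l)) := by
      rw [show (1 - 2 * l) = 1 + -(2 * l) by ring, Real.rpow_add hy0, Real.rpow_one]
    refine hmul.congr_deriv ?_
    simp only [Kf, pol0, pol1, pol2]
    rw [hyy]
    ring
  -- integrability of the derivative
  have hint : IntegrableOn
      (fun y => Kf l 2 x y + x * Kf l 1 x y + 2 * l * Kf l 0 x y) (Ioi (0:ℝ)) :=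
    ((Kf_integrable hl hl2 2 x).add ((Kf_integrable hl hl2 1 x).const_mul x)).add
      ((Kf_integrable hl hl2 0 x).const_mul (2 * l))
  -- continuity at 0
  have hcont : ContinuousWithinAt F (Ici 0) 0 := by
    apply ContinuousWithinAt.neg
    apply ContinuousWithinAt.mul
    · exact (Real.continuousAt_rpow_const 0 (1 - 2 * l) (Or.inr hle.le)).continuousWithinAt
    · exact (Continuous.continuousWithinAt (by fun_prop))
  -- limit at infinity
  have htop : Tendsto F atTop (𝓝 0) := by
    rw [show (0:ℝ) = -0 by norm_num]
    apply Tendsto.neg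
    have hg : Tendsto (fun y : ℝ => 128 / y ^ 3) atTop (𝓝 0) :=
      Tendsto.div_atTop tendsto_const_nhds (tendsto_pow_atTop (by norm_num))
    apply squeeze_zero_norm' ?_ hg
    · filter_upwards [eventually_ge_atTop (1:ℝ), eventually_ge_atTop (2 * x + 2)] with y hy1 hy2
      have hy0 : (0:ℝ) < y := lt_of_lt_of_le one_pos hy1
      have hyx : y / 2 ≤ y - x := by linarith
      have hyx0 : (0:ℝ) < y - x := by linarith
      have hexp1 : Real.exp (-(y - x) ^ 2 / 2) ≤ Real.exp (-y ^ 2 / 8) := by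
        rw [Real.exp_le_exp]
        nlinarith
      have hexp2 : Real.exp (-y ^ 2 / 8) ≤ 128 / y ^ 4 := by
        have hquad : y ^ 4 / 128 ≤ Real.exp (y ^ 2 / 8) := by
          have := Real.pow_div_factorial_le_exp (x := y ^ 2 / 8) (by positivity) 2
          calc y ^ 4 / 128 = (y ^ 2 / 8) ^ 2 / (Nat.factorial 2) := by
                simp [Nat.factorial]; ring
            _ ≤ Real.exp (y ^ 2 / 8) := this
        rw [show -y ^ 2 / 8 = -(y ^ 2 / 8) by ring, Real.exp_neg]
        rw [inv_le_iff_one_le_mul₀ (Real.exp_pos _)]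
        rw [div_mul_eq_mul_div, le_div_iff₀ (by positivity : (0:ℝ) < y ^ 4)]
        nlinarith
      have hpow : y ^ (1 - 2 * l) ≤ y := by
        calc y ^ (1 - 2 * l) ≤ y ^ (1:ℝ) :=
              Real.rpow_le_rpow_of_exponent_le hy1 (by linarith)
          _ = y := Real.rpow_one y
      have hppos : (0:ℝ) < y ^ (1 - 2 * l) := Real.rpow_pos_of_pos hy0 _
      rw [Real.norm_eq_abs, abs_mul, Real.abs_exp, abs_of_pos hppos]
      calc y ^ (1 - 2 * l) * Real.exp (-(y - x) ^ 2 / 2)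
          ≤ y * (128 / y ^ 4) := by
            apply mul_le_mul hpow (le_trans hexp1 hexp2) (Real.exp_pos _).le hy0.le
        _ = 128 / y ^ 3 := by field_simp
  have hFTC := integral_Ioi_of_hasDerivAt_of_tendsto hcont hderiv hint htop
  have hF0 : F 0 = 0 := by
    simp only [hF, Real.zero_rpow (ne_of_gt hle), zero_mul, neg_zero]
  rw [hF0, sub_zero] at hFTC
  have e1 := integral_add (μ := volume.restrict (Ioi (0:ℝ)))
    (f := fun y => Kf l 2 x y + x * Kf l 1 x y) (g := fun y => 2 * l * Kf l 0 x y)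
    ((Kf_integrable hl hl2 2 x).add ((Kf_integrable hl hl2 1 x).const_mul x))
    ((Kf_integrable hl hl2 0 x).const_mul (2 * l))
  have e2 := integral_add (μ := volume.restrict (Ioi (0:ℝ)))
    (f := fun y => Kf l 2 x y) (g := fun y => x * Kf l 1 x y)
    (Kf_integrable hl hl2 2 x) ((Kf_integrable hl hl2 1 x).const_mul x)
  rw [e1, e2, integral_const_mul, integral_const_mul] at hFTC
  linarith [hFTC]

/-- positivity of the base integral -/
lemma Kf0_pos {l : ℝ} (x y : ℝ) (hy : 0 < y) : (0:ℝ) < Kf l 0 x y := by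
  rw [Kf, pol0, one_mul]
  exact mul_pos (Real.rpow_pos_of_pos hy _) (Real.exp_pos _)

lemma I0_pos {l : ℝ} (hl : 0 < l) (hl2 : l < 1 / 2) (x : ℝ) :
    0 < ∫ y in Ioi (0:ℝ), Kf l 0 x y := by
  have hae : 0 ≤ᶠ[ae (volume.restrict (Ioi (0:ℝ)))] fun y => Kf l 0 x y := by
    filter_upwards [ae_restrict_mem measurableSet_Ioi] with y hy
    exact (Kf0_pos x y hy).le
  rw [setIntegral_pos_iff_support_of_nonneg_ae hae (Kf_integrable hl hl2 0 x)]
  have hsub : Ioi (0:ℝ) ⊆ Function.support (fun y => Kf l 0 x y) ∩ Ioi 0 := by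
    intro y hy
    exact mem_inter (Function.mem_support.mpr (ne_of_gt (Kf0_pos x y hy))) hy
  have h1 : (0:ENNReal) < volume (Ioi (0:ℝ)) := by
    rw [Real.volume_Ioi]
    exact ENNReal.zero_lt_top
  exact lt_of_lt_of_le h1 (measure_mono hsub)

end Stmt18Aux

open Stmt18Aux in
theorem stmt_18 (l : ℝ) (hl : 0 < l) (hl2 : l < 1/2)
    (φ : ℝ → ℝ)
    (hφ : ∀ x : ℝ, φ x = ∫ y in Ioi (0:ℝ), y ^ (-(2*l)) * Real.exp (-(y - x)^2 / 2))
    (x₀ : ℝ) (hx₀ : x₀ ∈ Ioo (0:ℝ) 1)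
    (h3 : deriv (deriv (deriv φ)) x₀ = 0) :
    deriv (deriv φ) x₀ < 0 := by
  obtain ⟨hx1, hx2⟩ := hx₀
  have hφeq : φ = fun x => ∫ y in Ioi (0:ℝ), Kf l 0 x y := by
    funext x
    rw [hφ x]
    simp only [Kf, pol0, one_mul]
  have hd0 : ∀ x, HasDerivAt φ (∫ y in Ioi (0:ℝ), Kf l 1 x y) x := by
    intro x
    rw [hφeq]
    exact integral_hasDerivAt hl hl2 0 (by norm_num) x
  have hder1 : deriv φ = fun x => ∫ y in Ioi (0:ℝ), Kf l 1 x y :=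
    funext fun x => (hd0 x).deriv
  have hder2 : deriv (deriv φ) = fun x => ∫ y in Ioi (0:ℝ), Kf l 2 x y := by
    rw [hder1]
    exact funext fun x => (integral_hasDerivAt hl hl2 1 (by norm_num) x).deriv
  have h3' : (∫ y in Ioi (0:ℝ), Kf l 3 x₀ y) = 0 := by
    have hstep : deriv (deriv (deriv φ)) x₀ = ∫ y in Ioi (0:ℝ), Kf l 3 x₀ y := by
      rw [hder2]
      exact (integral_hasDerivAt hl hl2 2 (by norm_num) x₀).deriv
    rw [← hstep, h3]
  have hodefun : (fun x => ∫ y in Ioi (0:ℝ), Kf l 2 x y)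
      = fun x => -(x * (∫ y in Ioi (0:ℝ), Kf l 1 x y))
          - 2 * l * (∫ y in Ioi (0:ℝ), Kf l 0 x y) := by
    funext x
    have := ode hl hl2 x
    linarith
  have hR : HasDerivAt (fun x => -(x * (∫ y in Ioi (0:ℝ), Kf l 1 x y))
        - 2 * l * (∫ y in Ioi (0:ℝ), Kf l 0 x y))
      (-(1 * (∫ y in Ioi (0:ℝ), Kf l 1 x₀ y) + x₀ * (∫ y in Ioi (0:ℝ), Kf l 2 x₀ y))
        - 2 * l * (∫ y in Ioi (0:ℝ), Kf l 1 x₀ y)) x₀ := by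
    have ha := ((hasDerivAt_id x₀).mul (integral_hasDerivAt hl hl2 1 (by norm_num) x₀)).neg
    have hb := (integral_hasDerivAt hl hl2 0 (by norm_num) x₀).const_mul (2 * l)
    exact ha.sub hb
  have hL : HasDerivAt (fun x => ∫ y in Ioi (0:ℝ), Kf l 2 x y)
      (∫ y in Ioi (0:ℝ), Kf l 3 x₀ y) x₀ :=
    integral_hasDerivAt hl hl2 2 (by norm_num) x₀
  rw [hodefun] at hL
  have heq := hL.unique hR
  have e2 : (0:ℝ) = -(1 * (∫ y in Ioi (0:ℝ), Kf l 1 x₀ y)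
      + x₀ * (∫ y in Ioi (0:ℝ), Kf l 2 x₀ y))
      - 2 * l * (∫ y in Ioi (0:ℝ), Kf l 1 x₀ y) := by rw [← heq, h3']
  have hode := ode hl hl2 x₀
  have hApos := I0_pos hl hl2 x₀
  rw [hder2]
  set A := ∫ y in Ioi (0:ℝ), Kf l 0 x₀ y with hA
  set B := ∫ y in Ioi (0:ℝ), Kf l 1 x₀ y with hB
  set C := ∫ y in Ioi (0:ℝ), Kf l 2 x₀ y with hC
  have key1 : (1 + 2 * l - x₀ ^ 2) * B = 2 * l * x₀ * A := by
    linear_combination e2 - x₀ * hode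
  have hc : (0:ℝ) < 1 + 2 * l - x₀ ^ 2 := by nlinarith
  have hBpos : 0 < B := by
    nlinarith [key1, hc, mul_pos (mul_pos hl hx1) hApos]
  show C < 0
  nlinarith [mul_pos hx1 hBpos, mul_pos hl hApos, hode]
end StmtAux
end

section
/- Fix x ∈ (−1, 0) and for λ ∈ (0, 1/2) define f_x(λ) = ∫₀^∞ y^{-2λ}((y−x)² − 1) exp(−(y−x)²/2) dy. Then lim_{λ→0⁺} f_x(λ) = −x·exp(−x²/2) > 0, and lim_{λ→(1/2)⁻} f_x(λ) = −∞. -/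
open Real MeasureTheory Set Filter

lemma key1_s19 (t : ℝ) : t^2 + 1 ≤ 2 * Real.exp (t^2/4) := by
  have h := Real.sum_le_exp_of_nonneg (x := t^2/4) (by positivity) 3
  simp [Finset.sum_range_succ] at h
  nlinarith [h, sq_nonneg (t^2/4 - 1)]

lemma key2_s19 (t : ℝ) : |t^2 - 1| * Real.exp (-t^2/2) ≤ 2 * Real.exp (-t^2/4) := by
  have h1 : |t^2 - 1| ≤ t^2 + 1 := by
    rw [abs_le]; constructor <;> nlinarith [sq_nonneg t]
  calc |t^2 - 1| * Real.exp (-t^2/2) ≤ (2 * Real.exp (t^2/4)) * Real.exp (-t^2/2) := by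
        exact mul_le_mul_of_nonneg_right (h1.trans (key1_s19 t)) (Real.exp_pos _).le
    _ = 2 * Real.exp (-t^2/4) := by rw [mul_assoc, ← Real.exp_add]; ring_nf

lemma gauss_int (x : ℝ) : Integrable (fun y : ℝ => Real.exp (-(y - x)^2/4)) := by
  have h := (integrable_exp_neg_mul_sq (b := (1/4:ℝ)) (by norm_num)).comp_sub_right x
  convert h using 2 with y
  ring_nf


lemma contF (x l : ℝ) :
    ContinuousOn (fun y : ℝ => y ^ (-(2*l)) * ((y - x)^2 - 1) * Real.exp (-(y - x)^2 / 2)) (Ioi 0) := by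
  apply ContinuousOn.mul
  apply ContinuousOn.mul
  · exact fun y hy => (Real.continuousAt_rpow_const y _ (Or.inl (ne_of_gt hy))).continuousWithinAt
  · fun_prop
  · fun_prop

lemma normF (x l : ℝ) {y : ℝ} (hy0 : 0 < y) :
    ‖y ^ (-(2*l)) * ((y - x)^2 - 1) * Real.exp (-(y - x)^2 / 2)‖
      ≤ y ^ (-(2*l)) * (2 * Real.exp (-(y-x)^2/4)) := by
  have h1 : (0:ℝ) < y ^ (-(2*l)) := Real.rpow_pos_of_pos hy0 _
  calc ‖y ^ (-(2*l)) * ((y - x)^2 - 1) * Real.exp (-(y - x)^2 / 2)‖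
      = y ^ (-(2*l)) * (|(y - x)^2 - 1| * Real.exp (-(y - x)^2 / 2)) := by
        rw [norm_eq_abs, abs_mul, abs_mul, abs_of_pos h1, abs_of_pos (Real.exp_pos _), mul_assoc]
    _ ≤ y ^ (-(2*l)) * (2 * Real.exp (-(y-x)^2/4)) :=
        mul_le_mul_of_nonneg_left (key2_s19 (y - x)) h1.le

lemma rpow_int {l : ℝ} (hl : l < 1/2) (ε : ℝ) :
    IntegrableOn (fun y : ℝ => y ^ (-(2*l))) (Ioc 0 ε) := by
  rcases le_or_gt ε 0 with h | h
  · rw [Ioc_eq_empty (fun h' => absurd (h.trans_lt h') (lt_irrefl _))]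
    exact integrableOn_empty
  · rw [integrableOn_Ioc_iff_integrableOn_Ioo]
    exact (intervalIntegral.integrableOn_Ioo_rpow_iff h).2 (by linarith)

lemma F_int_Ioc (x : ℝ) {l : ℝ} (hl : l < 1/2) (ε : ℝ) :
    IntegrableOn (fun y : ℝ => y ^ (-(2*l)) * ((y - x)^2 - 1) * Real.exp (-(y - x)^2 / 2)) (Ioc 0 ε) := by
  apply Integrable.mono' ((rpow_int hl ε).const_mul 2)
  · exact ((contF x l).mono Ioc_subset_Ioi_self).aestronglyMeasurable measurableSet_Ioc
  · filter_upwards [ae_restrict_mem measurableSet_Ioc] with y hy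
    have hy0 : (0:ℝ) < y := hy.1
    have h1 : (0:ℝ) < y ^ (-(2*l)) := Real.rpow_pos_of_pos hy0 _
    have h3 : Real.exp (-(y-x)^2/4) ≤ 1 :=
      Real.exp_le_one_iff.2 (by nlinarith [sq_nonneg (y-x)])
    refine (normF x l hy0).trans ?_
    calc y ^ (-(2*l)) * (2 * Real.exp (-(y-x)^2/4)) ≤ y ^ (-(2*l)) * (2 * 1) := by
          apply mul_le_mul_of_nonneg_left (by linarith) h1.le
      _ = 2 * y ^ (-(2*l)) := by ring

lemma rpow_bound_Ioi {l y ε : ℝ} (hl0 : 0 ≤ l) (hl : l ≤ 1/2) (hε : 0 < ε) (hε1 : ε ≤ 1)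
    (hy : ε < y) : y ^ (-(2*l)) ≤ ε⁻¹ := by
  have hy0 : (0:ℝ) < y := hε.trans hy
  rcases le_or_gt y 1 with h | h
  · calc y ^ (-(2*l)) ≤ y ^ (-(1:ℝ)) :=
          Real.rpow_le_rpow_of_exponent_ge hy0 h (by linarith)
      _ = y⁻¹ := Real.rpow_neg_one y
      _ ≤ ε⁻¹ := inv_anti₀ hε (le_of_lt hy)
  · calc y ^ (-(2*l)) ≤ 1 := Real.rpow_le_one_of_one_le_of_nonpos h.le (by linarith)
      _ ≤ ε⁻¹ := by simpa using inv_anti₀ hε hε1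

lemma F_int_Ioi (x : ℝ) {l : ℝ} (hl0 : 0 ≤ l) (hl : l ≤ 1/2) {ε : ℝ} (hε : 0 < ε) (hε1 : ε ≤ 1) :
    IntegrableOn (fun y : ℝ => y ^ (-(2*l)) * ((y - x)^2 - 1) * Real.exp (-(y - x)^2 / 2)) (Ioi ε) := by
  apply Integrable.mono' ((gauss_int x).const_mul (ε⁻¹ * 2)).integrableOn
  · exact ((contF x l).mono (fun y hy => hε.trans hy)).aestronglyMeasurable measurableSet_Ioi
  · filter_upwards [ae_restrict_mem measurableSet_Ioi] with y hy
    have hy0 : (0:ℝ) < y := hε.trans hy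
    have hyb : y ^ (-(2*l)) ≤ ε⁻¹ := rpow_bound_Ioi hl0 hl hε hε1 hy
    refine (normF x l hy0).trans ?_
    calc y ^ (-(2*l)) * (2 * Real.exp (-(y-x)^2/4))
        ≤ ε⁻¹ * (2 * Real.exp (-(y-x)^2/4)) :=
          mul_le_mul_of_nonneg_right hyb (by positivity)
      _ = ε⁻¹ * 2 * Real.exp (-(y-x)^2/4) := by ring


lemma G_int (x : ℝ) :
    IntegrableOn (fun y : ℝ => ((y - x)^2 - 1) * Real.exp (-(y - x)^2 / 2)) (Ioi 0) := by
  apply Integrable.mono' ((gauss_int x).const_mul 2).integrableOn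
  · exact (Continuous.aestronglyMeasurable (by fun_prop)).restrict
  · refine Eventually.of_forall fun y => ?_
    rw [norm_eq_abs, abs_mul, abs_of_pos (Real.exp_pos _)]
    exact key2_s19 (y - x)

lemma B_int (x : ℝ) :
    IntegrableOn (fun y : ℝ => (1 + y ^ (-(1/2:ℝ))) * (2 * Real.exp (-(y-x)^2/4))) (Ioi 0) := by
  have contB : ContinuousOn (fun y : ℝ => (1 + y ^ (-(1/2:ℝ))) * (2 * Real.exp (-(y-x)^2/4))) (Ioi 0) := by
    apply ContinuousOn.mul
    · exact continuousOn_const.add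
        (fun y hy => (Real.continuousAt_rpow_const y _ (Or.inl (ne_of_gt hy))).continuousWithinAt)
    · fun_prop
  rw [← Ioc_union_Ioi_eq_Ioi (zero_le_one : (0:ℝ) ≤ 1), integrableOn_union]
  constructor
  · have hint : IntegrableOn (fun y : ℝ => 2 + 2 * y ^ (-(1/2:ℝ))) (Ioc (0:ℝ) 1) := by
      apply Integrable.add
      · exact integrableOn_const measure_Ioc_lt_top.ne
      · have := rpow_int (l := 1/4) (by norm_num) 1
        norm_num at this
        exact this.const_mul 2
    apply Integrable.mono' hint
    · exact (contB.mono Ioc_subset_Ioi_self).aestronglyMeasurable measurableSet_Ioc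
    · filter_upwards [ae_restrict_mem measurableSet_Ioc] with y hy
      have hy0 : (0:ℝ) < y := hy.1
      have hr : (0:ℝ) < y ^ (-(1/2:ℝ)) := Real.rpow_pos_of_pos hy0 _
      have h3 : Real.exp (-(y-x)^2/4) ≤ 1 :=
        Real.exp_le_one_iff.2 (by nlinarith [sq_nonneg (y-x)])
      rw [norm_eq_abs, abs_of_pos (by positivity)]
      nlinarith [Real.exp_pos (-(y-x)^2/4)]
  · apply Integrable.mono' ((gauss_int x).const_mul 4).integrableOn
    · exact (contB.mono (fun y (hy : y ∈ Ioi (1:ℝ)) => (lt_trans one_pos hy : (0:ℝ) < y))).aestronglyMeasurable measurableSet_Ioi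
    · filter_upwards [ae_restrict_mem measurableSet_Ioi] with y hy
      have hy0 : (0:ℝ) < y := lt_trans one_pos hy
      have hr : y ^ (-(1/2:ℝ)) ≤ 1 :=
        Real.rpow_le_one_of_one_le_of_nonpos hy.le (by norm_num)
      rw [norm_eq_abs, abs_of_pos (by positivity)]
      nlinarith [Real.exp_pos (-(y-x)^2/4), Real.rpow_pos_of_pos hy0 (-(1/2:ℝ))]

lemma partA (x : ℝ) :
    Tendsto (fun l : ℝ => ∫ y in Ioi (0:ℝ), y ^ (-(2*l)) * ((y - x)^2 - 1) * Real.exp (-(y - x)^2 / 2))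
      (nhdsWithin 0 (Ioi 0))
      (nhds (∫ y in Ioi (0:ℝ), ((y - x)^2 - 1) * Real.exp (-(y - x)^2 / 2))) := by
  apply tendsto_integral_filter_of_dominated_convergence
    (fun y : ℝ => (1 + y ^ (-(1/2:ℝ))) * (2 * Real.exp (-(y-x)^2/4)))
  · exact Eventually.of_forall fun l =>
      (contF x l).aestronglyMeasurable measurableSet_Ioi
  · filter_upwards [Ioo_mem_nhdsGT_of_mem (by norm_num : (0:ℝ) ∈ Ico 0 (1/4:ℝ))] with l hl
    filter_upwards [ae_restrict_mem measurableSet_Ioi] with y hy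
    refine (normF x l hy).trans ?_
    have hb : y ^ (-(2*l)) ≤ 1 + y ^ (-(1/2:ℝ)) := by
      rcases le_or_gt y 1 with h | h
      · have : y ^ (-(2*l)) ≤ y ^ (-(1/2:ℝ)) :=
          Real.rpow_le_rpow_of_exponent_ge hy h (by nlinarith [hl.2])
        nlinarith [this]
      · have : y ^ (-(2*l)) ≤ 1 :=
          Real.rpow_le_one_of_one_le_of_nonpos h.le (by nlinarith [hl.1])
        nlinarith [this, Real.rpow_pos_of_pos (lt_trans one_pos h) (-(1/2:ℝ))]
    exact mul_le_mul_of_nonneg_right hb (by positivity)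
  · exact B_int x
  · filter_upwards [ae_restrict_mem measurableSet_Ioi] with y hy
    have hc : Continuous (fun l : ℝ => y ^ (-(2*l))) := by
      simp only [Real.rpow_def_of_pos hy]
      fun_prop
    have h1 : Tendsto (fun l : ℝ => y ^ (-(2*l))) (nhdsWithin 0 (Ioi 0)) (nhds 1) := by
      refine Tendsto.mono_left ?_ nhdsWithin_le_nhds
      simpa using hc.tendsto 0
    have := (h1.mul_const ((y - x)^2 - 1)).mul_const (Real.exp (-(y - x)^2 / 2))
    simpa using this

lemma ftc (x : ℝ) :
    ∫ y in Ioi (0:ℝ), ((y - x)^2 - 1) * Real.exp (-(y - x)^2 / 2) = -x * Real.exp (-x^2/2) := by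
  have hd : ∀ y ∈ Ioi (0:ℝ),
      HasDerivAt (fun y : ℝ => -(y - x) * Real.exp (-(y-x)^2/2))
        (((y - x)^2 - 1) * Real.exp (-(y - x)^2 / 2)) y := by
    intro y _
    have h1 : HasDerivAt (fun y : ℝ => y - x) 1 y := (hasDerivAt_id y).sub_const x
    have h2 : HasDerivAt (fun y : ℝ => -(y-x)^2/2) (-(y-x)) y := by
      have := ((h1.pow 2).neg).div_const 2
      refine this.congr_deriv ?_
      push_cast; ring
    have h4 := h1.neg.mul h2.exp
    refine h4.congr_deriv ?_
    simp only [Pi.neg_apply]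
    ring
  have hlim : Tendsto (fun y : ℝ => -(y - x) * Real.exp (-(y-x)^2/2)) atTop (nhds 0) := by
    have h0 : Tendsto (fun t : ℝ => t * Real.exp (-t^2/2)) atTop (nhds 0) := by
      apply squeeze_zero' (g := fun t : ℝ => t * Real.exp (-t))
      · filter_upwards [eventually_ge_atTop (0:ℝ)] with t ht
        positivity
      · filter_upwards [eventually_ge_atTop (2:ℝ)] with t ht
        have h : Real.exp (-t^2/2) ≤ Real.exp (-t) := Real.exp_le_exp.2 (by nlinarith)
        nlinarith [Real.exp_pos (-t^2/2), Real.exp_pos (-t)]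
      · have := Real.tendsto_pow_mul_exp_neg_atTop_nhds_zero 1
        simpa using this
    have hcomp : Tendsto (fun y : ℝ => y - x) atTop atTop :=
      tendsto_atTop_add_const_right _ (-x) tendsto_id
    have h2 := (h0.comp hcomp).neg
    rw [neg_zero] at h2
    refine h2.congr fun y => ?_
    simp only [Function.comp]
    ring_nf
  have := integral_Ioi_of_hasDerivAt_of_tendsto
    (Continuous.continuousWithinAt (by fun_prop)) hd (G_int x) hlim
  rw [this]
  norm_num


lemma partC (x : ℝ) (hx1 : -1 < x) (hx0 : x < 0) :
    Tendsto (fun l : ℝ => ∫ y in Ioi (0:ℝ),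
        y ^ (-(2*l)) * ((y - x)^2 - 1) * Real.exp (-(y - x)^2 / 2))
      (nhdsWithin (1/2) (Iio (1/2))) atBot := by
  set ε : ℝ := (1 + x)/2 with hεdef
  have hε0 : 0 < ε := by rw [hεdef]; linarith
  have hε1 : ε ≤ 1 := by rw [hεdef]; linarith
  set c : ℝ := (1 - (ε - x)^2) * Real.exp (-(1:ℝ)/2) with hcdef
  have hsq : (ε - x)^2 < 1 := by rw [hεdef]; nlinarith
  have hc : 0 < c := mul_pos (by linarith) (Real.exp_pos _)
  set C : ℝ := ∫ y in Ioi ε, ε⁻¹ * 2 * Real.exp (-(y-x)^2/4) with hCdef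
  have hev : ∀ᶠ l in nhdsWithin (1/2:ℝ) (Iio (1/2)), (∫ y in Ioi (0:ℝ),
        y ^ (-(2*l)) * ((y - x)^2 - 1) * Real.exp (-(y - x)^2 / 2))
      ≤ C + -(c * ε ^ (1 - 2*l) * (1 - 2*l)⁻¹) := by
    filter_upwards [Ioo_mem_nhdsLT_of_mem (by norm_num : (1/2:ℝ) ∈ Ioc (0:ℝ) (1/2))] with l hl
    obtain ⟨hl0, hl2⟩ := hl
    have hIoc_int := F_int_Ioc x hl2 ε
    have hIoi_int := F_int_Ioi x hl0.le hl2.le hε0 hε1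
    have hsplit : (∫ y in Ioi (0:ℝ),
          y ^ (-(2*l)) * ((y - x)^2 - 1) * Real.exp (-(y - x)^2 / 2))
        = (∫ y in Ioc (0:ℝ) ε, y ^ (-(2*l)) * ((y - x)^2 - 1) * Real.exp (-(y - x)^2 / 2))
          + ∫ y in Ioi ε, y ^ (-(2*l)) * ((y - x)^2 - 1) * Real.exp (-(y - x)^2 / 2) := by
      rw [← setIntegral_union (Ioc_disjoint_Ioi le_rfl) measurableSet_Ioi hIoc_int hIoi_int,
        Ioc_union_Ioi_eq_Ioi hε0.le]
    rw [hsplit]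
    have h1 : (∫ y in Ioc (0:ℝ) ε, y ^ (-(2*l)) * ((y - x)^2 - 1) * Real.exp (-(y - x)^2 / 2))
        ≤ ∫ y in Ioc (0:ℝ) ε, -c * y ^ (-(2*l)) := by
      apply setIntegral_mono_on hIoc_int ((rpow_int hl2 ε).const_mul (-c)) measurableSet_Ioc
      intro y hy
      have hy0 : (0:ℝ) < y := hy.1
      have hyx : (y - x)^2 ≤ (ε - x)^2 := by nlinarith [hy.2]
      have hE1 : Real.exp (-(y-x)^2/2) ≤ 1 := Real.exp_le_one_iff.2 (by nlinarith)
      have hE2 : Real.exp (-(1:ℝ)/2) ≤ Real.exp (-(y-x)^2/2) := Real.exp_le_exp.2 (by nlinarith)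
      have hA : ((y - x)^2 - 1) * Real.exp (-(y - x)^2 / 2) ≤ -c := by
        rw [hcdef]
        nlinarith [Real.exp_pos (-(y-x)^2/2), Real.exp_pos (-(1:ℝ)/2)]
      have hp : (0:ℝ) < y ^ (-(2*l)) := Real.rpow_pos_of_pos hy0 _
      calc y ^ (-(2*l)) * ((y - x)^2 - 1) * Real.exp (-(y - x)^2 / 2)
          = y ^ (-(2*l)) * (((y - x)^2 - 1) * Real.exp (-(y - x)^2 / 2)) := by ring
        _ ≤ y ^ (-(2*l)) * (-c) := mul_le_mul_of_nonneg_left hA hp.le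
        _ = -c * y ^ (-(2*l)) := by ring
    have hIoc_val : (∫ y in Ioc (0:ℝ) ε, -c * y ^ (-(2*l)))
        = -(c * ε ^ (1 - 2*l) * (1 - 2*l)⁻¹) := by
      rw [integral_const_mul, ← intervalIntegral.integral_of_le hε0.le,
        integral_rpow (Or.inl (by linarith)),
        Real.zero_rpow (by intro h; linarith [h] : -(2*l) + 1 ≠ 0)]
      rw [show -(2*l) + 1 = 1 - 2*l by ring]
      rw [div_eq_mul_inv]
      ring
    have h2 : (∫ y in Ioi ε, y ^ (-(2*l)) * ((y - x)^2 - 1) * Real.exp (-(y - x)^2 / 2)) ≤ C := by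
      rw [hCdef]
      apply setIntegral_mono_on hIoi_int ((gauss_int x).const_mul (ε⁻¹ * 2)).integrableOn
        measurableSet_Ioi
      intro y hy
      have hy0 : (0:ℝ) < y := hε0.trans hy
      calc y ^ (-(2*l)) * ((y - x)^2 - 1) * Real.exp (-(y - x)^2 / 2)
          ≤ ‖y ^ (-(2*l)) * ((y - x)^2 - 1) * Real.exp (-(y - x)^2 / 2)‖ := le_abs_self _
        _ ≤ y ^ (-(2*l)) * (2 * Real.exp (-(y-x)^2/4)) := normF x l hy0
        _ ≤ ε⁻¹ * (2 * Real.exp (-(y-x)^2/4)) :=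
            mul_le_mul_of_nonneg_right (rpow_bound_Ioi hl0.le hl2.le hε0 hε1 hy) (by positivity)
        _ = ε⁻¹ * 2 * Real.exp (-(y-x)^2/4) := by ring
    linarith [h1.trans_eq hIoc_val, h2]
  refine tendsto_atBot_mono' _ hev ?_
  have h1 : Tendsto (fun l : ℝ => 1 - 2*l) (nhdsWithin (1/2) (Iio (1/2))) (nhdsWithin 0 (Ioi 0)) := by
    rw [tendsto_nhdsWithin_iff]
    constructor
    · refine Tendsto.mono_left ?_ nhdsWithin_le_nhds
      have : Continuous (fun l : ℝ => 1 - 2*l) := by fun_prop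
      have := this.tendsto (1/2)
      norm_num at this
      exact this
    · filter_upwards [eventually_mem_nhdsWithin] with l hl
      simp only [mem_Iio] at hl
      simp only [mem_Ioi]
      linarith
  have h2 : Tendsto (fun l : ℝ => (1 - 2*l)⁻¹) (nhdsWithin (1/2) (Iio (1/2))) atTop :=
    h1.inv_tendsto_nhdsGT_zero
  have h3 : Tendsto (fun l : ℝ => c * ε ^ (1 - 2*l)) (nhdsWithin (1/2) (Iio (1/2))) (nhds c) := by
    have hcont : Continuous (fun l : ℝ => ε ^ (1 - 2*l)) := by
      simp only [Real.rpow_def_of_pos hε0]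
      fun_prop
    have htt : Tendsto (fun l : ℝ => ε ^ (1 - 2*l)) (nhdsWithin (1/2) (Iio (1/2))) (nhds (ε ^ (0:ℝ))) := by
      refine Tendsto.mono_left ?_ nhdsWithin_le_nhds
      have := hcont.tendsto (1/2)
      norm_num at this ⊢
      exact this
    rw [Real.rpow_zero] at htt
    simpa using htt.const_mul c
  have h5 : Tendsto (fun l : ℝ => c * ε ^ (1 - 2*l) * (1 - 2*l)⁻¹)
      (nhdsWithin (1/2) (Iio (1/2))) atTop :=
    Filter.Tendsto.pos_mul_atTop hc h3 h2
  have h6 := tendsto_neg_atTop_atBot.comp h5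
  exact tendsto_atBot_add_const_left _ C h6

theorem stmt_19 (x : ℝ) (hx : x ∈ Ioo (-1:ℝ) 0)
    (f : ℝ → ℝ)
    (hf : ∀ l : ℝ, f l =
      ∫ y in Ioi (0:ℝ), y ^ (-(2*l)) * ((y - x)^2 - 1) * Real.exp (-(y - x)^2 / 2)) :
    Tendsto f (nhdsWithin 0 (Ioi 0)) (nhds (-x * Real.exp (-x^2/2))) ∧
    0 < -x * Real.exp (-x^2/2) ∧
    Tendsto f (nhdsWithin (1/2) (Iio (1/2))) atBot := by
  obtain ⟨hx1, hx0⟩ := hx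
  have hfe : f = fun l : ℝ => ∫ y in Ioi (0:ℝ),
      y ^ (-(2*l)) * ((y - x)^2 - 1) * Real.exp (-(y - x)^2 / 2) := funext hf
  refine ⟨?_, mul_pos (by linarith) (Real.exp_pos _), ?_⟩
  · rw [hfe, ← ftc x]
    exact partA x
  · rw [hfe]
    exact partC x hx1 hx0
end
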